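/- arXiv:1110.0088 — 6 statements merged into one kernel-verified Lean document; each statement's English description precedes it below -/
import Mathlib

section
/- Let N ≥ 2, let A be a real N×N matrix and b ∈ ℝ^N be such that rank[b, Ab, …, A^{N−1}b] = N. Let K denote the N×N matrix whose columns are b, Ab, …, A^{N−1}b and set 𝓛 = min_{‖ζ‖=1} ‖Kζ‖; then 𝓛 > 0 and for every ζ ∈ ℝ^N with ‖ζ‖ = 1, the function g(s) = ⟨e^{As} b, ζ⟩ defined on [0,∞) satisfies Σ_{i=0}^{N−1} |g^{(i)}(s)| ≥ 𝓛 e^{−‖A‖ s} for all s ∈ [0,∞), where g^{(i)}(s) = ⟨e^{As} A^i b, ζ⟩ denotes the i-th derivative of g and ‖A‖ is the operator norm of A. -/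
noncomputable section

/-- Euclidean norm on `ℝ^N`. -/
def euNorm {N : ℕ} (x : Fin N → ℝ) : ℝ := Real.sqrt (∑ i, x i ^ 2)

/-- Euclidean inner product on `ℝ^N`. -/
def euDot {N : ℕ} (x y : Fin N → ℝ) : ℝ := ∑ i, x i * y i

/-- Operator norm (w.r.t. the Euclidean norm) of an `N × N` real matrix. -/
def opNorm {N : ℕ} (A : Matrix (Fin N) (Fin N) ℝ) : ℝ :=
  sSup ((fun x => euNorm (A.mulVec x)) '' {x | euNorm x ≤ 1})

/-- The Kalman matrix, whose columns are `b, Ab, …, A^{N-1}b`. -/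
def kalman {N : ℕ} (A : Matrix (Fin N) (Fin N) ℝ) (b : Fin N → ℝ) :
    Matrix (Fin N) (Fin N) ℝ :=
  Matrix.of fun i j => ((A ^ (j : ℕ)).mulVec b) i

namespace SwitchAux

open scoped Matrix
open NormedSpace

variable {N : ℕ}

lemma euNorm_nonneg (x : Fin N → ℝ) : 0 ≤ euNorm x := Real.sqrt_nonneg _

lemma euNorm_eq_norm (x : Fin N → ℝ) :
    euNorm x = ‖(WithLp.equiv 2 (Fin N → ℝ)).symm x‖ := by
  rw [EuclideanSpace.norm_eq]
  simp [euNorm, sq_abs]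

lemma euNorm_zero : euNorm (0 : Fin N → ℝ) = 0 := by simp [euNorm]

lemma euNorm_pos {x : Fin N → ℝ} (hx : x ≠ 0) : 0 < euNorm x := by
  rw [euNorm_eq_norm]
  have h : (WithLp.equiv 2 (Fin N → ℝ)).symm x ≠ 0 := by
    intro h
    exact hx (by simpa using congrArg (WithLp.equiv 2 (Fin N → ℝ)) h)
  exact norm_pos_iff.mpr h

lemma euNorm_smul (c : ℝ) (x : Fin N → ℝ) : euNorm (c • x) = |c| * euNorm x := by
  rw [euNorm_eq_norm, euNorm_eq_norm]
  have h : (WithLp.equiv 2 (Fin N → ℝ)).symm (c • x)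
      = c • (WithLp.equiv 2 (Fin N → ℝ)).symm x := rfl
  rw [h, norm_smul, Real.norm_eq_abs]

lemma euDot_self (x : Fin N → ℝ) : euDot x x = euNorm x ^ 2 := by
  rw [euNorm, Real.sq_sqrt (Finset.sum_nonneg fun i _ => sq_nonneg _)]
  simp [euDot, sq]

lemma euDot_le (x y : Fin N → ℝ) : euDot x y ≤ euNorm x * euNorm y := by
  simpa [euDot, euNorm] using Real.sum_mul_le_sqrt_mul_sqrt Finset.univ x y

lemma euNorm_le_sum_abs (x : Fin N → ℝ) : euNorm x ≤ ∑ i, |x i| := by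
  rw [euNorm]
  have h1 : ∑ i, x i ^ 2 = ∑ i, |x i| ^ 2 := by simp [sq_abs]
  rw [h1]
  calc Real.sqrt (∑ i, |x i| ^ 2) ≤ Real.sqrt ((∑ i, |x i|) ^ 2) :=
        Real.sqrt_le_sqrt (Finset.sum_sq_le_sq_sum_of_nonneg fun i _ => abs_nonneg _)
    _ = ∑ i, |x i| := Real.sqrt_sq (Finset.sum_nonneg fun i _ => abs_nonneg _)

lemma clm_apply (A : Matrix (Fin N) (Fin N) ℝ) (x : Fin N → ℝ) :
    Matrix.toEuclideanCLM (𝕜 := ℝ) A ((WithLp.equiv 2 (Fin N → ℝ)).symm x)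
      = (WithLp.equiv 2 (Fin N → ℝ)).symm (A.mulVec x) := by
  exact Matrix.toEuclideanCLM_toLp A x

lemma mulVec_le (A : Matrix (Fin N) (Fin N) ℝ) (x : Fin N → ℝ) :
    euNorm (A.mulVec x) ≤ ‖Matrix.toEuclideanCLM (𝕜 := ℝ) A‖ * euNorm x := by
  rw [euNorm_eq_norm, euNorm_eq_norm, ← clm_apply]
  exact (Matrix.toEuclideanCLM (𝕜 := ℝ) A).le_opNorm _

lemma opNorm_eq (A : Matrix (Fin N) (Fin N) ℝ) :
    opNorm A = ‖Matrix.toEuclideanCLM (𝕜 := ℝ) A‖ := by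
  rw [← ContinuousLinearMap.sSup_unitClosedBall_eq_norm, opNorm]
  congr 1
  ext y
  constructor
  · rintro ⟨x, hx, rfl⟩
    refine ⟨(WithLp.equiv 2 (Fin N → ℝ)).symm x, ?_, ?_⟩
    · simpa [Metric.mem_closedBall, euNorm_eq_norm] using hx
    · show ‖Matrix.toEuclideanCLM (𝕜 := ℝ) A ((WithLp.equiv 2 (Fin N → ℝ)).symm x)‖ = _
      rw [clm_apply, ← euNorm_eq_norm]
  · rintro ⟨x, hx, rfl⟩
    refine ⟨WithLp.equiv 2 (Fin N → ℝ) x, ?_, ?_⟩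
    · have h2 : (WithLp.equiv 2 (Fin N → ℝ)).symm (WithLp.equiv 2 (Fin N → ℝ) x) = x := by simp
      simpa [Set.mem_setOf_eq, euNorm_eq_norm, h2, mem_closedBall_zero_iff] using hx
    · have h2 : (WithLp.equiv 2 (Fin N → ℝ)).symm (WithLp.equiv 2 (Fin N → ℝ) x) = x := by simp
      show euNorm (A.mulVec (WithLp.equiv 2 (Fin N → ℝ) x)) = _
      rw [euNorm_eq_norm, ← clm_apply, h2]

lemma norm_transpose (A : Matrix (Fin N) (Fin N) ℝ) :
    ‖Matrix.toEuclideanCLM (𝕜 := ℝ) Aᵀ‖ = ‖Matrix.toEuclideanCLM (𝕜 := ℝ) A‖ := by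
  have h1 : Aᵀ = star A := by
    ext i j
    simp [Matrix.star_eq_conjTranspose, Matrix.conjTranspose_apply]
  rw [h1, map_star, ContinuousLinearMap.star_eq_adjoint]
  exact LinearIsometryEquiv.norm_map ContinuousLinearMap.adjoint _

lemma norm_exp_le {𝔸 : Type*} [NormedRing 𝔸] [NormedAlgebra ℝ 𝔸] [CompleteSpace 𝔸]
    [NormOneClass 𝔸] (x : 𝔸) : ‖exp x‖ ≤ Real.exp ‖x‖ := by
  simp only [exp_eq_tsum ℝ]
  refine (norm_tsum_le_tsum_norm (norm_expSeries_summable' x)).trans ?_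
  have h2 : Summable fun n : ℕ => ((n.factorial : ℝ))⁻¹ * ‖x‖ ^ n := by
    simpa [smul_eq_mul] using expSeries_summable' (𝕂 := ℝ) (𝔸 := ℝ) ‖x‖
  have h3 : ∑' n : ℕ, ((n.factorial : ℝ))⁻¹ * ‖x‖ ^ n = Real.exp ‖x‖ := by
    rw [Real.exp_eq_exp_ℝ]
    simp only [exp_eq_tsum ℝ, smul_eq_mul]
  rw [← h3]
  refine Summable.tsum_le_tsum ?_ (norm_expSeries_summable' x) h2
  intro n
  rw [norm_smul, Real.norm_eq_abs, abs_of_nonneg (by positivity)]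
  exact mul_le_mul_of_nonneg_left (norm_pow_le x n) (by positivity)

lemma isUnit_of_rank {K : Matrix (Fin N) (Fin N) ℝ} (h : K.rank = N) : IsUnit K := by
  rw [← Matrix.mulVec_injective_iff_isUnit]
  have hr : LinearMap.range K.mulVecLin = ⊤ := by
    apply Submodule.eq_top_of_finrank_eq
    rw [Matrix.rank] at h
    rw [h]
    simp [Module.finrank_pi]
  have hsurj : Function.Surjective K.mulVecLin := LinearMap.range_eq_top.mp hr
  have hinj : Function.Injective K.mulVecLin := LinearMap.injective_iff_surjective.mpr hsurj
  exact hinj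

lemma clm_smul (c : ℝ) (M : Matrix (Fin N) (Fin N) ℝ) :
    Matrix.toEuclideanCLM (𝕜 := ℝ) (c • M) = c • Matrix.toEuclideanCLM (𝕜 := ℝ) M :=
  map_smul _ c M

lemma clm_continuous :
    Continuous (Matrix.toEuclideanCLM (𝕜 := ℝ) (n := Fin N)) := by
  let f : Matrix (Fin N) (Fin N) ℝ →ₗ[ℝ]
      (EuclideanSpace ℝ (Fin N) →L[ℝ] EuclideanSpace ℝ (Fin N)) :=
    { toFun := Matrix.toEuclideanCLM (𝕜 := ℝ), map_add' := fun a b => map_add _ a b,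
      map_smul' := fun c a => map_smul _ c a }
  exact f.continuous_of_finiteDimensional

set_option maxHeartbeats 1000000 in
lemma clm_exp (M : Matrix (Fin N) (Fin N) ℝ) :
    Matrix.toEuclideanCLM (𝕜 := ℝ) (exp M) = exp (Matrix.toEuclideanCLM (𝕜 := ℝ) M) := by
  letI : SeminormedRing (Matrix (Fin N) (Fin N) ℝ) := Matrix.linftyOpSemiNormedRing
  letI : NormedRing (Matrix (Fin N) (Fin N) ℝ) := Matrix.linftyOpNormedRing
  letI : NormedAlgebra ℝ (Matrix (Fin N) (Fin N) ℝ) := Matrix.linftyOpNormedAlgebra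
  letI : NormedAlgebra ℚ (Matrix (Fin N) (Fin N) ℝ) := Matrix.linftyOpNormedAlgebra
  let f : Matrix (Fin N) (Fin N) ℝ →+*
      (EuclideanSpace ℝ (Fin N) →L[ℝ] EuclideanSpace ℝ (Fin N)) :=
    { toFun := Matrix.toEuclideanCLM (𝕜 := ℝ), map_one' := map_one _,
      map_mul' := fun a b => map_mul _ a b, map_zero' := map_zero _,
      map_add' := fun a b => map_add _ a b }
  have hf : Continuous f := clm_continuous
  exact map_exp f hf M

end SwitchAux

set_option synthInstance.maxHeartbeats 1000000 in
set_option maxHeartbeats 2000000 in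
open scoped Matrix in
/-- if `rank [b, Ab, …, A^{N-1}b] = N` then
`𝓛 = min_{‖ζ‖=1} ‖Kζ‖ > 0` and for every unit vector `ζ` the switching
function `g(s) = ⟨e^{As} b, ζ⟩` satisfies
`∑_{i=0}^{N-1} |g^{(i)}(s)| ≥ 𝓛 e^{-‖A‖s}` for all `s ≥ 0`,
where `g^{(i)}(s) = ⟨e^{As} A^i b, ζ⟩`. -/
theorem switching_function_lower_bound
    (N : ℕ) (hN : 2 ≤ N) (A : Matrix (Fin N) (Fin N) ℝ) (b : Fin N → ℝ)
    (hrank : (kalman A b).rank = N)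
    (L : ℝ)
    (hL : L = sInf ((fun ζ => euNorm ((kalman A b).mulVec ζ)) '' {ζ | euNorm ζ = 1})) :
    0 < L ∧
      ∀ ζ : Fin N → ℝ, euNorm ζ = 1 → ∀ s : ℝ, 0 ≤ s →
        L * Real.exp (-(opNorm A) * s) ≤
          ∑ i ∈ Finset.range N,
            |euDot ((NormedSpace.exp (s • A)).mulVec ((A ^ i).mulVec b)) ζ| := by
  classical
  haveI : NeZero N := ⟨by omega⟩
  haveI : Nontrivial (EuclideanSpace ℝ (Fin N)) := by
    have : Nonempty (Fin N) := ⟨0⟩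
    infer_instance
  set K := kalman A b with hKdef
  have hunit : IsUnit K := SwitchAux.isUnit_of_rank hrank
  have hdet : IsUnit K.det := (Matrix.isUnit_iff_isUnit_det K).mp hunit
  have hKinvK : K⁻¹ * K = 1 := Matrix.nonsing_inv_mul K hdet
  have hKKinv : K * K⁻¹ = 1 := Matrix.mul_nonsing_inv K hdet
  set ζ₀ : Fin N → ℝ := Pi.single 0 1 with hζ₀def
  have hζ₀ : euNorm ζ₀ = 1 := by
    rw [euNorm]
    have h1 : ∑ i, ζ₀ i ^ 2 = 1 := by
      rw [hζ₀def, Finset.sum_eq_single 0]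
      · simp
      · intro i _ hi
        simp [Pi.single_apply, hi]
      · simp
    rw [h1, Real.sqrt_one]
  have hSne : ((fun ζ => euNorm (K.mulVec ζ)) '' {ζ | euNorm ζ = 1}).Nonempty :=
    ⟨_, ζ₀, hζ₀, rfl⟩
  have hSbdd : BddBelow ((fun ζ => euNorm (K.mulVec ζ)) '' {ζ | euNorm ζ = 1}) := by
    refine ⟨0, ?_⟩
    rintro y ⟨x, -, rfl⟩
    exact SwitchAux.euNorm_nonneg _
  have hLle : ∀ ζ : Fin N → ℝ, euNorm ζ = 1 → L ≤ euNorm (K.mulVec ζ) := by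
    intro ζ hζ
    rw [hL]
    exact csInf_le hSbdd ⟨ζ, hζ, rfl⟩
  set c := ‖Matrix.toEuclideanCLM (𝕜 := ℝ) K⁻¹‖ with hc
  have hlow : ∀ ζ : Fin N → ℝ, euNorm ζ = 1 → 1 ≤ c * euNorm (K.mulVec ζ) := by
    intro ζ hζ
    have h1 : K⁻¹.mulVec (K.mulVec ζ) = ζ := by
      rw [Matrix.mulVec_mulVec, hKinvK, Matrix.one_mulVec]
    calc (1 : ℝ) = euNorm ζ := hζ.symm
      _ = euNorm (K⁻¹.mulVec (K.mulVec ζ)) := by rw [h1]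
      _ ≤ c * euNorm (K.mulVec ζ) := SwitchAux.mulVec_le _ _
  have hcpos : 0 < c := by
    have := hlow ζ₀ hζ₀
    nlinarith [SwitchAux.euNorm_nonneg (K.mulVec ζ₀)]
  have hLpos : 0 < L := by
    have h1 : 1 / c ≤ L := by
      rw [hL]
      apply le_csInf hSne
      rintro y ⟨ζ, hζ, rfl⟩
      have h2 := hlow ζ hζ
      rw [div_le_iff₀ hcpos]
      nlinarith
    have : (0 : ℝ) < 1 / c := by positivity
    linarith
  have hkey : ∀ x : Fin N → ℝ, L * euNorm x ≤ euNorm (Kᵀ.mulVec x) := by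
    intro x
    by_cases hx : x = 0
    · simp [hx, Matrix.mulVec_zero, SwitchAux.euNorm_zero]
    have hxn : 0 < euNorm x := SwitchAux.euNorm_pos hx
    set w := K⁻¹.mulVec x with hw
    have hKw : K.mulVec w = x := by
      rw [hw, Matrix.mulVec_mulVec, hKKinv, Matrix.one_mulVec]
    have hw0 : w ≠ 0 := by
      intro h
      apply hx
      rw [← hKw, h, Matrix.mulVec_zero]
    have hwn : 0 < euNorm w := SwitchAux.euNorm_pos hw0
    set u := (euNorm w)⁻¹ • w with hu
    have hu1 : euNorm u = 1 := by
      rw [hu, SwitchAux.euNorm_smul, abs_of_pos (inv_pos.mpr hwn), inv_mul_cancel₀ hwn.ne']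
    have hKu : K.mulVec u = (euNorm w)⁻¹ • x := by
      rw [hu, Matrix.mulVec_smul, hKw]
    have hL1 : L ≤ (euNorm w)⁻¹ * euNorm x := by
      have h5 := hLle u hu1
      rwa [hKu, SwitchAux.euNorm_smul, abs_of_pos (inv_pos.mpr hwn)] at h5
    have h1 : euDot (Kᵀ.mulVec x) w = euNorm x ^ 2 := by
      have h6 : Kᵀ.mulVec x = x ᵥ* K := Matrix.mulVec_transpose K x
      rw [h6]
      calc euDot (x ᵥ* K) w = (x ᵥ* K) ⬝ᵥ w := rfl
        _ = x ⬝ᵥ K.mulVec w := (Matrix.dotProduct_mulVec x K w).symm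
        _ = x ⬝ᵥ x := by rw [hKw]
        _ = euNorm x ^ 2 := SwitchAux.euDot_self x
    have hdot : euDot (Kᵀ.mulVec x) u = (euNorm w)⁻¹ * euNorm x ^ 2 := by
      have h7 : euDot (Kᵀ.mulVec x) u = (euNorm w)⁻¹ * euDot (Kᵀ.mulVec x) w := by
        rw [hu]
        simp only [euDot, Pi.smul_apply, smul_eq_mul, Finset.mul_sum]
        exact Finset.sum_congr rfl fun i _ => by ring
      rw [h7, h1]
    have hcs : euDot (Kᵀ.mulVec x) u ≤ euNorm (Kᵀ.mulVec x) := by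
      have h8 := SwitchAux.euDot_le (Kᵀ.mulVec x) u
      rwa [hu1, mul_one] at h8
    calc L * euNorm x ≤ ((euNorm w)⁻¹ * euNorm x) * euNorm x :=
          mul_le_mul_of_nonneg_right hL1 hxn.le
      _ = (euNorm w)⁻¹ * euNorm x ^ 2 := by ring
      _ = euDot (Kᵀ.mulVec x) u := hdot.symm
      _ ≤ euNorm (Kᵀ.mulVec x) := hcs
  refine ⟨hLpos, ?_⟩
  intro ζ hζ s hs
  set E := NormedSpace.exp (s • A) with hE
  set η := Eᵀ.mulVec ζ with hη
  have hET : Eᵀ = NormedSpace.exp (s • Aᵀ) := by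
    rw [hE, ← Matrix.exp_transpose, Matrix.transpose_smul]
  have hζeq : (NormedSpace.exp (-(s • Aᵀ))).mulVec η = ζ := by
    rw [hη, Matrix.mulVec_mulVec, hET,
      ← Matrix.exp_add_of_commute _ _ ((Commute.refl (s • Aᵀ)).neg_left),
      neg_add_cancel, NormedSpace.exp_zero, Matrix.one_mulVec]
  have hnorm_exp :
      ‖Matrix.toEuclideanCLM (𝕜 := ℝ) (NormedSpace.exp (-(s • Aᵀ)))‖
        ≤ Real.exp (opNorm A * s) := by
    rw [SwitchAux.clm_exp]
    refine (SwitchAux.norm_exp_le _).trans (Real.exp_le_exp.mpr ?_)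
    have h9 : (-(s • Aᵀ)) = (-s) • Aᵀ := by rw [neg_smul]
    rw [h9, SwitchAux.clm_smul,
      norm_smul (-s) (Matrix.toEuclideanCLM (𝕜 := ℝ) Aᵀ), Real.norm_eq_abs, abs_neg,
      abs_of_nonneg hs, SwitchAux.norm_transpose, SwitchAux.opNorm_eq]
    exact le_of_eq (mul_comm _ _)
  have h1n : (1 : ℝ) ≤ Real.exp (opNorm A * s) * euNorm η := by
    calc (1 : ℝ) = euNorm ζ := hζ.symm
      _ = euNorm ((NormedSpace.exp (-(s • Aᵀ))).mulVec η) := by rw [hζeq]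
      _ ≤ ‖Matrix.toEuclideanCLM (𝕜 := ℝ) (NormedSpace.exp (-(s • Aᵀ)))‖ * euNorm η :=
          SwitchAux.mulVec_le _ _
      _ ≤ Real.exp (opNorm A * s) * euNorm η :=
          mul_le_mul_of_nonneg_right hnorm_exp (SwitchAux.euNorm_nonneg _)
  have hηlow : Real.exp (-(opNorm A) * s) ≤ euNorm η := by
    have h2 := mul_le_mul_of_nonneg_left h1n (Real.exp_pos (-(opNorm A * s))).le
    rw [mul_one, ← mul_assoc, ← Real.exp_add, neg_add_cancel, Real.exp_zero, one_mul] at h2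
    rw [neg_mul]
    exact h2
  have hsum : ∑ i ∈ Finset.range N, |euDot (E.mulVec ((A ^ i).mulVec b)) ζ|
      = ∑ j : Fin N, |(Kᵀ.mulVec η) j| := by
    rw [← Fin.sum_univ_eq_sum_range (fun i => |euDot (E.mulVec ((A ^ i).mulVec b)) ζ|) N]
    refine Finset.sum_congr rfl fun j _ => ?_
    congr 1
    have h3 : euDot (E.mulVec ((A ^ (j : ℕ)).mulVec b)) ζ = η ⬝ᵥ ((A ^ (j : ℕ)).mulVec b) := by
      calc euDot (E.mulVec ((A ^ (j : ℕ)).mulVec b)) ζ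
          = (E.mulVec ((A ^ (j : ℕ)).mulVec b)) ⬝ᵥ ζ := rfl
        _ = ζ ⬝ᵥ (E.mulVec ((A ^ (j : ℕ)).mulVec b)) := dotProduct_comm _ _
        _ = (ζ ᵥ* E) ⬝ᵥ ((A ^ (j : ℕ)).mulVec b) := Matrix.dotProduct_mulVec ζ E _
        _ = η ⬝ᵥ ((A ^ (j : ℕ)).mulVec b) := by rw [hη, Matrix.mulVec_transpose]
    rw [h3, show Kᵀ.mulVec η = η ᵥ* K from Matrix.mulVec_transpose K η]
    simp [Matrix.vecMul, dotProduct, hKdef, kalman, Matrix.of_apply]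
  rw [hsum]
  calc L * Real.exp (-(opNorm A) * s) ≤ L * euNorm η :=
        mul_le_mul_of_nonneg_left hηlow hLpos.le
    _ ≤ euNorm (Kᵀ.mulVec η) := hkey η
    _ ≤ ∑ j, |(Kᵀ.mulVec η) j| := SwitchAux.euNorm_le_sum_abs _
end
end

section
/- Consider the linear control system ẏ(t) = Ay(t) + Bu(t), y(0) = 0, with N ≥ 2, 1 ≤ M ≤ N, A ∈ ℝ^{N×N}, B ∈ ℝ^{N×M}, and admissible controls u measurable with values in [−1,1]^M. Assume the system is normal, i.e., rank[b_j, Ab_j, …, A^{N−1}b_j] = N for every column b_j of B. Then for every T₀ > 0 there exists a constant γ′ > 0, depending only on N, M, A, B, T₀, such that for every 0 < T ≤ T₀ the closed ball B(0, γ′ T^N) centered at the origin with radius γ′ T^N is contained in the reachable set 𝓡^T. -/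
noncomputable section
open MeasureTheory

/-- An admissible control: measurable with values in the cube `[-1,1]^M`. -/
def IsAdmissible (M : ℕ) (u : ℝ → Fin M → ℝ) : Prop :=
  Measurable u ∧ ∀ t i, u t i ∈ Set.Icc (-1 : ℝ) 1

/-- The reachable set from the origin at time `T` for `ẏ = Ay + Bu`. -/
def linReach (N M : ℕ) (A : Matrix (Fin N) (Fin N) ℝ) (B : Matrix (Fin N) (Fin M) ℝ)
    (T : ℝ) : Set (Fin N → ℝ) :=
  {x | ∃ u : ℝ → Fin M → ℝ, IsAdmissible M u ∧
    x = ∫ s in (0:ℝ)..T, (NormedSpace.exp ((T - s) • A)).mulVec (B.mulVec (u s))}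

/-! ### Auxiliary facts -/
open Matrix
attribute [local instance] Matrix.linftyOpNormedAddCommGroup Matrix.linftyOpNormedSpace
  Matrix.linftyOpNormedRing Matrix.linftyOpNormedAlgebra

lemma exp_taylor_remainder {𝔸 : Type*} [NormedRing 𝔸] [NormedAlgebra ℝ 𝔸] [CompleteSpace 𝔸]
    (N : ℕ) (hN : 1 ≤ N) (X : 𝔸) :
    ‖NormedSpace.exp X - ∑ p ∈ Finset.range N, ((p.factorial : ℝ)⁻¹) • X ^ p‖ ≤
      ‖X‖ ^ N / N.factorial * Real.exp ‖X‖ := by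
  have hsum : Summable (fun p : ℕ => ((p.factorial : ℝ)⁻¹) • X ^ p) :=
    NormedSpace.expSeries_summable' (𝕂 := ℝ) X
  have hkey : NormedSpace.exp X - ∑ p ∈ Finset.range N, ((p.factorial : ℝ)⁻¹) • X ^ p
      = ∑' p : ℕ, ((p + N).factorial : ℝ)⁻¹ • X ^ (p + N) := by
    have h := Summable.sum_add_tsum_nat_add (f := fun p : ℕ => ((p.factorial : ℝ)⁻¹) • X ^ p) N hsum
    rw [NormedSpace.exp_eq_tsum (𝕂 := ℝ)]
    simp only [← h]
    abel
  rw [hkey]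
  have hg : ∀ p : ℕ, ‖(((p + N).factorial : ℝ)⁻¹) • X ^ (p + N)‖ ≤
      (‖X‖ ^ N / N.factorial) * (‖X‖ ^ p / p.factorial) := by
    intro p
    have h1 : ‖(((p + N).factorial : ℝ)⁻¹) • X ^ (p + N)‖
        ≤ ((p + N).factorial : ℝ)⁻¹ * ‖X‖ ^ (p + N) := by
      rw [norm_smul, Real.norm_eq_abs, abs_of_nonneg (by positivity)]
      gcongr
      exact norm_pow_le' X (by omega)
    refine h1.trans ?_
    rw [pow_add]
    have hfac : (p.factorial : ℝ) * N.factorial ≤ ((p + N).factorial : ℝ) := by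
      exact_mod_cast Nat.le_of_dvd (Nat.factorial_pos _)
        (Nat.factorial_mul_factorial_dvd_factorial_add p N)
    have h2 : ((p + N).factorial : ℝ)⁻¹ ≤ (p.factorial : ℝ)⁻¹ * (N.factorial : ℝ)⁻¹ := by
      rw [← mul_inv]
      apply inv_anti₀ (by positivity) hfac
    calc ((p + N).factorial : ℝ)⁻¹ * (‖X‖ ^ p * ‖X‖ ^ N)
        ≤ ((p.factorial : ℝ)⁻¹ * (N.factorial : ℝ)⁻¹) * (‖X‖ ^ p * ‖X‖ ^ N) := by
          apply mul_le_mul_of_nonneg_right h2 (by positivity)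
      _ = (‖X‖ ^ N / N.factorial) * (‖X‖ ^ p / p.factorial) := by ring
  have hsummable : Summable (fun p : ℕ => (‖X‖ ^ N / N.factorial) * (‖X‖ ^ p / p.factorial)) :=
    (Real.summable_pow_div_factorial ‖X‖).mul_left _
  have hbound := tsum_of_norm_bounded hsummable.hasSum hg
  refine hbound.trans ?_
  rw [tsum_mul_left]
  rw [Real.exp_eq_exp_ℝ, NormedSpace.exp_eq_tsum_div]

lemma isUnit_of_rank_eq_card {N : ℕ} (K : Matrix (Fin N) (Fin N) ℝ) (h : K.rank = N) :
    IsUnit K := by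
  rw [← Matrix.mulVec_surjective_iff_isUnit]
  have hr : LinearMap.range K.mulVecLin = ⊤ := by
    apply Submodule.eq_top_of_finrank_eq
    rw [← Matrix.rank, h, Module.finrank_fin_fun]
  intro y
  have hy : y ∈ LinearMap.range K.mulVecLin := hr ▸ Submodule.mem_top
  exact hy

/-- entrywise bound gives linfty operator norm bound -/
lemma linfty_norm_le_of_entries {N : ℕ} (M : Matrix (Fin N) (Fin N) ℝ) {c : ℝ} (hc : 0 ≤ c)
    (h : ∀ i j, |M i j| ≤ c) : ‖M‖ ≤ N * c := by
  rw [Matrix.linfty_opNorm_def]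
  have key : ((Finset.univ : Finset (Fin N)).sup fun i => ∑ j, ‖M i j‖₊ : NNReal)
      ≤ (N : NNReal) * c.toNNReal := by
    apply Finset.sup_le
    intro i _
    calc ∑ j, ‖M i j‖₊ ≤ ∑ _j : Fin N, c.toNNReal := by
          apply Finset.sum_le_sum
          intro j _
          have h2 := h i j
          rw [← Real.norm_eq_abs] at h2
          exact (Real.le_toNNReal_iff_coe_le hc).mpr h2
      _ = (N : NNReal) * c.toNNReal := by simp [Finset.sum_const, nsmul_eq_mul]
  calc ((Finset.univ.sup fun i => ∑ j, ‖M i j‖₊ : NNReal) : ℝ)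
      ≤ (((N : NNReal) * c.toNNReal : NNReal) : ℝ) := by exact_mod_cast key
    _ = N * c := by push_cast [Real.coe_toNNReal c hc]; ring

/-- The moment matrix. -/
def Cmat (N : ℕ) : Matrix (Fin N) (Fin N) ℝ :=
  Matrix.of fun p k => (((k : ℕ) + 1 : ℝ) / N) ^ ((p : ℕ) + 1) / ((p : ℕ) + 1).factorial

lemma isUnit_Cmat {N : ℕ} (hN : 1 ≤ N) : IsUnit (Cmat N) := by
  have hN0 : (N : ℝ) ≠ 0 := Nat.cast_ne_zero.mpr (by omega)
  set x : Fin N → ℝ := fun k => ((k : ℕ) + 1 : ℝ) / N with hx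
  have hinj : Function.Injective x := by
    intro a b hab
    have h2 : ((a:ℕ):ℝ) + 1 = ((b:ℕ):ℝ) + 1 := by
      have := hab; simp only [hx] at this; exact (div_left_inj' hN0).mp this
    exact Fin.ext (by exact_mod_cast add_right_cancel h2)
  have hfac : Cmat N = Matrix.diagonal (fun p : Fin N => (((p : ℕ) + 1).factorial : ℝ)⁻¹) *
      (Matrix.vandermonde x)ᵀ * Matrix.diagonal x := by
    ext p k
    simp [Cmat, Matrix.mul_diagonal, Matrix.diagonal_mul, Matrix.vandermonde, pow_succ,
      div_eq_mul_inv]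
    ring
  rw [Matrix.isUnit_iff_isUnit_det]
  rw [hfac, Matrix.det_mul, Matrix.det_mul, Matrix.det_transpose, Matrix.det_diagonal,
    Matrix.det_diagonal]
  apply IsUnit.mul
  apply IsUnit.mul
  · apply isUnit_iff_ne_zero.mpr
    apply Finset.prod_ne_zero_iff.mpr
    intro p _
    exact inv_ne_zero (Nat.cast_ne_zero.mpr (Nat.factorial_ne_zero _))
  · exact isUnit_iff_ne_zero.mpr (Matrix.det_vandermonde_ne_zero_iff.mpr hinj)
  · apply isUnit_iff_ne_zero.mpr
    apply Finset.prod_ne_zero_iff.mpr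
    intro k _
    positivity

lemma norm_le_euNorm {N : ℕ} (x : Fin N → ℝ) : ‖x‖ ≤ euNorm x := by
  have h0 : (0:ℝ) ≤ euNorm x := Real.sqrt_nonneg _
  rw [pi_norm_le_iff_of_nonneg h0]
  intro i
  rw [Real.norm_eq_abs, ← Real.sqrt_sq_eq_abs]
  apply Real.sqrt_le_sqrt
  exact Finset.single_le_sum (f := fun j => x j ^ 2) (fun j _ => sq_nonneg _) (Finset.mem_univ i)

lemma sum_mulVec {N : ℕ} {m' : Type*} (s : Finset m') (f : m' → Matrix (Fin N) (Fin N) ℝ)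
    (v : Fin N → ℝ) : (∑ p ∈ s, f p) *ᵥ v = ∑ p ∈ s, (f p) *ᵥ v := by
  ext i
  simp only [Matrix.mulVec, dotProduct, Matrix.sum_apply, Finset.sum_mul,
    Finset.sum_apply]
  rw [Finset.sum_comm]

set_option maxHeartbeats 4000000 in
/-- for a normal linear system, for every `T₀ > 0` there is
`γ' > 0` such that for every `0 < T ≤ T₀` the closed Euclidean ball of radius
`γ' T^N` centered at the origin is contained in the reachable set `𝓡^T`. -/
theorem linear_reachable_set_contains_ball
    (N M : ℕ) (hN : 2 ≤ N) (hM1 : 1 ≤ M) (hMN : M ≤ N)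
    (A : Matrix (Fin N) (Fin N) ℝ) (B : Matrix (Fin N) (Fin M) ℝ)
    (hnormal : ∀ j : Fin M, (kalman A (fun i => B i j)).rank = N)
    (T₀ : ℝ) (hT₀ : 0 < T₀) :
    ∃ γ' : ℝ, 0 < γ' ∧ ∀ T : ℝ, 0 < T → T ≤ T₀ →
      {x : Fin N → ℝ | euNorm x ≤ γ' * T ^ N} ⊆ linReach N M A B T := by
  -- setup
  haveI : Nonempty (Fin N) := ⟨⟨0, by omega⟩⟩
  set i₀ : Fin M := ⟨0, hM1⟩ with hi₀
  set b : Fin N → ℝ := fun i => B i i₀ with hbdef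
  set K := kalman A b with hKdef
  have hKunit : IsUnit K := isUnit_of_rank_eq_card K (hnormal i₀)
  have hKdet : IsUnit K.det := (Matrix.isUnit_iff_isUnit_det K).mp hKunit
  have hCunit : IsUnit (Cmat N) := isUnit_Cmat (by omega)
  have hCdet : IsUnit (Cmat N).det := (Matrix.isUnit_iff_isUnit_det _).mp hCunit
  set Kinv := K⁻¹ with hKinvdef
  set Cinv := (Cmat N)⁻¹ with hCinvdef
  have hKK : K * Kinv = 1 := Matrix.mul_nonsing_inv K hKdet
  have hKK' : Kinv * K = 1 := Matrix.nonsing_inv_mul K hKdet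
  have hCC : Cmat N * Cinv = 1 := Matrix.mul_nonsing_inv _ hCdet
  have hCC' : Cinv * Cmat N = 1 := Matrix.nonsing_inv_mul _ hCdet
  clear_value b K Kinv Cinv
  -- constants
  set cb : ℝ := ‖b‖ with hcb
  have hcb0 : 0 ≤ cb := norm_nonneg _
  set CA : ℝ := ‖A‖ ^ N * Real.exp ‖A‖ / N.factorial with hCA
  have hCA0 : 0 ≤ CA := by positivity
  set c₁ : ℝ := ‖Cinv‖ * ‖Kinv‖ + 1 with hc₁
  have hc₁1 : 1 ≤ c₁ := by
    have : (0:ℝ) ≤ ‖Cinv‖ * ‖Kinv‖ := by positivity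
    linarith
  have hc₁0 : 0 < c₁ := by linarith
  set CE : ℝ := N * (CA * cb) + 1 with hCE
  have hCE1 : (1:ℝ) ≤ CE := by
    have : (0:ℝ) ≤ N * (CA * cb) := by positivity
    linarith
  have hCE0 : 0 < CE := by linarith
  set T₁ : ℝ := min 1 (1 / (2 * CE * c₁)) with hT₁
  have hT₁0 : 0 < T₁ := lt_min one_pos (by positivity)
  have hT₁1 : T₁ ≤ 1 := min_le_left _ _
  set ρ : ℝ := max 1 (T₀ / T₁) with hρ
  have hρ1 : (1:ℝ) ≤ ρ := le_max_left _ _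
  have hρ0 : 0 < ρ := by linarith
  have hN0 : (0:ℝ) < N := by positivity
  set γ' : ℝ := 1 / (2 * N * c₁ * ρ ^ N) with hγ'
  have hγ'0 : 0 < γ' := by positivity
  refine ⟨γ', hγ'0, ?_⟩
  intro T hT hTT₀ x hx
  rw [Set.mem_setOf_eq] at hx
  set τ : ℝ := min T T₁ with hτdef
  have hτ0 : 0 < τ := lt_min hT hT₁0
  have hτ1 : τ ≤ 1 := le_trans (min_le_right _ _) hT₁1
  have hτT : τ ≤ T := min_le_left _ _
  have hτT₁ : τ ≤ T₁ := min_le_right _ _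
  -- grid points
  set t : Fin N → ℝ := fun k => ((k : ℕ) + 1) * τ / N with ht
  have ht0 : ∀ k, 0 < t k := by
    intro k
    apply div_pos (by positivity) hN0
  have htτ : ∀ k, t k ≤ τ := by
    intro k
    rw [ht, div_le_iff₀ hN0]
    have : ((k:ℕ) + 1 : ℝ) ≤ N := by
      have := k.isLt
      exact_mod_cast Nat.succ_le_of_lt this
    calc ((k:ℕ) + 1 : ℝ) * τ ≤ N * τ := by nlinarith
      _ = τ * N := by ring
  -- basic vector fields
  set f : ℝ → (Fin N → ℝ) := fun σ => (NormedSpace.exp (σ • A)).mulVec b with hf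
  have hfc : Continuous f := by
    apply Continuous.matrix_mulVec _ continuous_const
    exact NormedSpace.exp_continuous.comp (continuous_id'.smul continuous_const)
  set v : Fin N → (Fin N → ℝ) := fun k => ∫ σ in (0:ℝ)..(t k), f σ with hv
  clear_value v
  set L : Matrix (Fin N) (Fin N) ℝ := Matrix.of (fun i k => v k i) with hL
  clear_value L
  set D : Matrix (Fin N) (Fin N) ℝ := Matrix.diagonal (fun p : Fin N => τ ^ ((p:ℕ) + 1)) with hD
  set Dinv : Matrix (Fin N) (Fin N) ℝ :=
    Matrix.diagonal (fun p : Fin N => (τ ^ ((p:ℕ) + 1))⁻¹) with hDinv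
  have hDD : Dinv * D = 1 := by
    rw [hDinv, hD, Matrix.diagonal_mul_diagonal]
    have hfun : (fun p : Fin N => (τ ^ ((p:ℕ) + 1))⁻¹ * τ ^ ((p:ℕ) + 1)) = fun _ => (1:ℝ) :=
      funext fun p => inv_mul_cancel₀ (pow_ne_zero _ (ne_of_gt hτ0))
    rw [hfun, Matrix.diagonal_one]
  have hDD' : D * Dinv = 1 := by
    rw [hD, hDinv, Matrix.diagonal_mul_diagonal]
    have hfun : (fun p : Fin N => τ ^ ((p:ℕ) + 1) * (τ ^ ((p:ℕ) + 1))⁻¹) = fun _ => (1:ℝ) :=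
      funext fun p => mul_inv_cancel₀ (pow_ne_zero _ (ne_of_gt hτ0))
    rw [hfun, Matrix.diagonal_one]
  clear_value D Dinv
  set G : Matrix (Fin N) (Fin N) ℝ := K * D * Cmat N with hG
  clear_value G
  set E : Matrix (Fin N) (Fin N) ℝ := L - G with hE
  clear_value E
  -- the error bound
  have hEnorm : ‖E‖ ≤ CE * τ ^ (N + 1) := by
    have hN1 : 1 ≤ N := by omega
    have hNne : (N:ℝ) ≠ 0 := ne_of_gt hN0
    set P : ℝ → Matrix (Fin N) (Fin N) ℝ :=
      fun σ => ∑ p : Fin N, (σ ^ (p:ℕ) * (((p:ℕ).factorial : ℝ))⁻¹) • A ^ (p:ℕ) with hP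
    have hPsum : ∀ σ : ℝ, P σ = ∑ p ∈ Finset.range N, ((p.factorial:ℝ)⁻¹) • (σ • A) ^ p := by
      intro σ
      rw [hP, ← Fin.sum_univ_eq_sum_range (fun p => ((p.factorial:ℝ)⁻¹) • (σ • A) ^ p) N]
      apply Finset.sum_congr rfl
      intro p _
      rw [smul_pow, smul_smul, mul_comm]
    have hrem : ∀ σ ∈ Set.Icc (0:ℝ) τ, ‖NormedSpace.exp (σ • A) - P σ‖ ≤ CA * τ ^ N := by
      intro σ hσ
      obtain ⟨hσ0, hστ⟩ := hσ
      rw [hPsum σ]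
      refine (exp_taylor_remainder N hN1 (σ • A)).trans ?_
      have hnorm : ‖σ • A‖ = σ * ‖A‖ := by
        rw [norm_smul, Real.norm_eq_abs, abs_of_nonneg hσ0]
      rw [hnorm, mul_pow]
      have h1 : σ * ‖A‖ ≤ ‖A‖ := by nlinarith [norm_nonneg A]
      calc σ ^ N * ‖A‖ ^ N / N.factorial * Real.exp (σ * ‖A‖)
          ≤ τ ^ N * ‖A‖ ^ N / N.factorial * Real.exp ‖A‖ := by
            gcongr <;> first | exact hσ0 | exact hστ | exact h1
        _ = CA * τ ^ N := by rw [hCA]; ring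
    -- the polynomial part integrates to the G column
    have hPmul : ∀ σ : ℝ, (P σ) *ᵥ b
        = ∑ p : Fin N, (σ ^ (p:ℕ) * (((p:ℕ).factorial : ℝ))⁻¹) • ((A ^ (p:ℕ)) *ᵥ b) := by
      intro σ
      rw [hP, _root_.sum_mulVec]
      apply Finset.sum_congr rfl
      intro p _
      rw [Matrix.smul_mulVec]
    have hPcont : Continuous (fun σ : ℝ => (P σ) *ᵥ b) := by
      have : (fun σ : ℝ => (P σ) *ᵥ b)
          = fun σ => ∑ p : Fin N, (σ ^ (p:ℕ) * (((p:ℕ).factorial : ℝ))⁻¹) • ((A ^ (p:ℕ)) *ᵥ b) :=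
        funext hPmul
      rw [this]
      apply continuous_finset_sum
      intro p _
      exact ((continuous_pow _).mul continuous_const).smul continuous_const
    have hPint : ∀ k : Fin N, (∫ σ in (0:ℝ)..(t k), (P σ) *ᵥ b) = fun i => G i k := by
      intro k
      have h1 : (∫ σ in (0:ℝ)..(t k), (P σ) *ᵥ b)
          = ∑ p : Fin N, ((t k) ^ ((p:ℕ)+1) / ((p:ℕ)+1) * (((p:ℕ).factorial : ℝ))⁻¹)
              • ((A ^ (p:ℕ)) *ᵥ b) := by
        rw [intervalIntegral.integral_congr (g := fun σ =>
            ∑ p : Fin N, (σ ^ (p:ℕ) * (((p:ℕ).factorial : ℝ))⁻¹) • ((A ^ (p:ℕ)) *ᵥ b))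
            (fun σ _ => hPmul σ)]
        rw [intervalIntegral.integral_finset_sum (f := fun (p : Fin N) (σ : ℝ) =>
            (σ ^ (p:ℕ) * (((p:ℕ).factorial : ℝ))⁻¹) • ((A ^ (p:ℕ)) *ᵥ b)) (fun p _ =>
          (((continuous_pow _).mul continuous_const).smul continuous_const).intervalIntegrable _ _)]
        apply Finset.sum_congr rfl
        intro p _
        rw [intervalIntegral.integral_smul_const, intervalIntegral.integral_mul_const,
          integral_pow]
        norm_num
      rw [h1]
      funext i
      rw [hG, Matrix.mul_apply]
      simp only [Finset.sum_apply, Pi.smul_apply, smul_eq_mul]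
      apply Finset.sum_congr rfl
      intro p _
      have hKD : (K * D) i p = K i p * τ ^ ((p:ℕ)+1) := by
        rw [hD, Matrix.mul_diagonal]
      have hKip : K i p = ((A ^ ((p:ℕ))) *ᵥ b) i := by
        rw [hKdef]
        simp [kalman]
      have hCval : Cmat N p k
          = ((((k:ℕ) + 1 : ℝ)) / N) ^ ((p:ℕ) + 1) / (((p:ℕ) + 1).factorial) := by
        simp [Cmat]
      rw [hKD, hKip, hCval]
      have htk : t k = (((k:ℕ) + 1 : ℝ)) * τ / N := by rw [ht]
      rw [htk]
      rw [show (((k:ℕ) + 1 : ℝ)) * τ / N = ((((k:ℕ) + 1 : ℝ)) / N) * τ from by ring, mul_pow]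
      rw [Nat.factorial_succ]
      have hfacne : (((p:ℕ).factorial : ℝ)) ≠ 0 := Nat.cast_ne_zero.mpr (Nat.factorial_ne_zero _)
      have hp1ne : (((p:ℕ) : ℝ) + 1) ≠ 0 := by positivity
      push_cast
      field_simp
    -- entrywise bound on E
    have hEentry : ∀ i k, |E i k| ≤ CA * cb * τ ^ N * τ := by
      intro i k
      have hfint : IntervalIntegrable f MeasureTheory.volume 0 (t k) :=
        hfc.intervalIntegrable _ _
      have hPintble : IntervalIntegrable (fun σ => (P σ) *ᵥ b) MeasureTheory.volume 0 (t k) :=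
        hPcont.intervalIntegrable _ _
      have hveq : v k - (fun i => G i k) = ∫ σ in (0:ℝ)..(t k), (f σ - (P σ) *ᵥ b) := by
        rw [intervalIntegral.integral_sub hfint hPintble, hPint k, hv]
      have hEik : E i k = (v k - fun i => G i k) i := by
        rw [hE, hL]
        simp [Matrix.sub_apply]
      have hbnd : ‖v k - fun i => G i k‖ ≤ (CA * cb * τ ^ N) * τ := by
        rw [hveq]
        have hmain : ∀ σ ∈ Set.uIoc (0:ℝ) (t k), ‖f σ - (P σ) *ᵥ b‖ ≤ CA * cb * τ ^ N := by
          intro σ hσ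
          rw [Set.uIoc_of_le (ht0 k).le] at hσ
          have hσm : σ ∈ Set.Icc (0:ℝ) τ := ⟨hσ.1.le, le_trans hσ.2 (htτ k)⟩
          have heq : f σ - (P σ) *ᵥ b = (NormedSpace.exp (σ • A) - P σ) *ᵥ b := by
            rw [hf, Matrix.sub_mulVec]
          rw [heq]
          calc ‖(NormedSpace.exp (σ • A) - P σ) *ᵥ b‖
              ≤ ‖NormedSpace.exp (σ • A) - P σ‖ * ‖b‖ := Matrix.linfty_opNorm_mulVec _ _
            _ ≤ (CA * τ ^ N) * cb := by
                apply mul_le_mul_of_nonneg_right (hrem σ hσm) (norm_nonneg _)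
            _ = CA * cb * τ ^ N := by ring
        have h2 := intervalIntegral.norm_integral_le_of_norm_le_const hmain
        rw [sub_zero, abs_of_nonneg (ht0 k).le] at h2
        refine h2.trans ?_
        apply mul_le_mul_of_nonneg_left (htτ k) (by positivity)
      calc |E i k| = ‖(v k - fun i => G i k) i‖ := by rw [hEik, Real.norm_eq_abs]
        _ ≤ ‖v k - fun i => G i k‖ := norm_le_pi_norm _ i
        _ ≤ (CA * cb * τ ^ N) * τ := hbnd
        _ = CA * cb * τ ^ N * τ := by ring
    have hfin := linfty_norm_le_of_entries E (by positivity : (0:ℝ) ≤ CA * cb * τ ^ N * τ) hEentry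
    refine hfin.trans ?_
    rw [pow_succ]
    calc (N:ℝ) * (CA * cb * τ ^ N * τ) = (N * (CA * cb)) * (τ ^ N * τ) := by ring
      _ ≤ CE * (τ ^ N * τ) := by
          apply mul_le_mul_of_nonneg_right _ (by positivity)
          rw [hCE]
          linarith
  -- inverses
  set Ginv : Matrix (Fin N) (Fin N) ℝ := Cinv * (Dinv * Kinv) with hGinv
  clear_value Ginv
  have hGinvG : Ginv * G = 1 := by
    rw [hGinv, hG]
    calc Cinv * (Dinv * Kinv) * (K * D * Cmat N)
        = Cinv * ((Dinv * ((Kinv * K) * D)) * Cmat N) := by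
          simp only [Matrix.mul_assoc]
      _ = 1 := by rw [hKK', Matrix.one_mul, hDD, Matrix.one_mul, hCC']
  have hGGinv : G * Ginv = 1 := by
    rw [hGinv, hG]
    calc K * D * Cmat N * (Cinv * (Dinv * Kinv))
        = K * (D * ((Cmat N * Cinv) * Dinv)) * Kinv := by
          simp only [Matrix.mul_assoc]
      _ = 1 := by rw [hCC, Matrix.one_mul, hDD', Matrix.mul_one, hKK]
  have hDinvNorm : ‖Dinv‖ ≤ (τ ^ N)⁻¹ := by
    rw [hDinv, Matrix.linfty_opNorm_diagonal]
    rw [pi_norm_le_iff_of_nonneg (by positivity)]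
    intro p
    rw [Real.norm_eq_abs, abs_of_nonneg (by positivity)]
    apply inv_anti₀ (by positivity)
    apply pow_le_pow_of_le_one hτ0.le hτ1
    exact Nat.succ_le_of_lt p.isLt
  have hGinvNorm : ‖Ginv‖ ≤ c₁ * (τ ^ N)⁻¹ := by
    rw [hGinv]
    calc ‖Cinv * (Dinv * Kinv)‖ ≤ ‖Cinv‖ * ‖Dinv * Kinv‖ := Matrix.linfty_opNorm_mul _ _
      _ ≤ ‖Cinv‖ * (‖Dinv‖ * ‖Kinv‖) := by
          apply mul_le_mul_of_nonneg_left (Matrix.linfty_opNorm_mul _ _) (norm_nonneg _)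
      _ ≤ ‖Cinv‖ * ((τ ^ N)⁻¹ * ‖Kinv‖) := by
          apply mul_le_mul_of_nonneg_left _ (norm_nonneg _)
          apply mul_le_mul_of_nonneg_right hDinvNorm (norm_nonneg _)
      _ = (‖Cinv‖ * ‖Kinv‖) * (τ ^ N)⁻¹ := by ring
      _ ≤ c₁ * (τ ^ N)⁻¹ := by
          apply mul_le_mul_of_nonneg_right _ (by positivity)
          rw [hc₁]; linarith
  -- Neumann series
  set F : Matrix (Fin N) (Fin N) ℝ := -(E * Ginv) with hF
  clear_value F
  have hFnorm : ‖F‖ ≤ 1 / 2 := by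
    rw [hF, norm_neg]
    calc ‖E * Ginv‖ ≤ ‖E‖ * ‖Ginv‖ := Matrix.linfty_opNorm_mul _ _
      _ ≤ (CE * τ ^ (N + 1)) * (c₁ * (τ ^ N)⁻¹) := by
          apply mul_le_mul hEnorm hGinvNorm (norm_nonneg _) (by positivity)
      _ = CE * c₁ * τ := by
          rw [pow_succ]
          field_simp
      _ ≤ CE * c₁ * T₁ := by
          apply mul_le_mul_of_nonneg_left hτT₁ (by positivity)
      _ ≤ CE * c₁ * (1 / (2 * CE * c₁)) := by
          apply mul_le_mul_of_nonneg_left (min_le_right _ _) (by positivity)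
      _ = 1 / 2 := by field_simp
  have hFlt : ‖F‖ < 1 := lt_of_le_of_lt hFnorm (by norm_num)
  set S : Matrix (Fin N) (Fin N) ℝ := ∑' n : ℕ, F ^ n with hS
  have hSmul : (1 - F) * S = 1 := mul_neg_geom_series F hFlt
  have hSnorm : ‖S‖ ≤ 2 := by
    have h1 := tsum_geometric_le_of_norm_lt_one F hFlt
    rw [norm_one] at h1
    have h2 : (1 - ‖F‖)⁻¹ ≤ 2 := by
      rw [inv_le_iff_one_le_mul₀ (by linarith)]
      linarith
    calc ‖S‖ ≤ 1 - 1 + (1 - ‖F‖)⁻¹ := h1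
      _ ≤ 2 := by linarith
  clear_value S
  set Minv : Matrix (Fin N) (Fin N) ℝ := Ginv * S with hMinv
  clear_value Minv
  have hLMinv : L * Minv = 1 := by
    have hLG : L * Ginv = 1 - F := by
      have : L = G + E := by rw [hE]; abel
      rw [this, Matrix.add_mul, hGGinv, hF, sub_neg_eq_add]
    calc L * Minv = (L * Ginv) * S := by rw [hMinv, ← Matrix.mul_assoc]
      _ = 1 := by rw [hLG, hSmul]
  -- the control coefficients
  set w : Fin N → ℝ := Minv *ᵥ x with hw
  clear_value w
  have hxLw : L *ᵥ w = x := by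
    rw [hw, Matrix.mulVec_mulVec, hLMinv, Matrix.one_mulVec]
  have hTρτ : T ^ N ≤ ρ ^ N * τ ^ N := by
    rcases le_total T T₁ with h | h
    · have hτeq : τ = T := min_eq_left h
      rw [hτeq]
      have : (1:ℝ) ≤ ρ ^ N := one_le_pow₀ hρ1
      nlinarith [pow_pos hT N]
    · have hτeq : τ = T₁ := min_eq_right h
      rw [hτeq]
      have h1 : T ^ N ≤ T₀ ^ N := pow_le_pow_left₀ hT.le hTT₀ N
      have h2 : (T₀ / T₁) ^ N ≤ ρ ^ N := pow_le_pow_left₀ (by positivity) (le_max_right _ _) N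
      have h3 : (T₀ / T₁) ^ N * T₁ ^ N = T₀ ^ N := by
        rw [div_pow]
        field_simp
      nlinarith [pow_pos hT₁0 N]
  have hwnorm : (N:ℝ) * ‖w‖ ≤ 1 := by
    have h1 : ‖w‖ ≤ ‖Minv‖ * ‖x‖ := by
      rw [hw]; exact Matrix.linfty_opNorm_mulVec _ _
    have h2 : ‖Minv‖ ≤ (c₁ * (τ ^ N)⁻¹) * 2 := by
      rw [hMinv]
      calc ‖Ginv * S‖ ≤ ‖Ginv‖ * ‖S‖ := Matrix.linfty_opNorm_mul _ _
        _ ≤ (c₁ * (τ ^ N)⁻¹) * 2 :=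
            mul_le_mul hGinvNorm hSnorm (norm_nonneg _) (by positivity)
    have h3 : ‖x‖ ≤ γ' * T ^ N := le_trans (norm_le_euNorm x) hx
    have h4 : ‖w‖ ≤ (c₁ * (τ ^ N)⁻¹) * 2 * (γ' * T ^ N) :=
      le_trans h1 (mul_le_mul h2 h3 (norm_nonneg _) (by positivity))
    have h5 : (c₁ * (τ ^ N)⁻¹) * 2 * (γ' * T ^ N)
        ≤ (c₁ * (τ ^ N)⁻¹) * 2 * (γ' * (ρ ^ N * τ ^ N)) := by
      apply mul_le_mul_of_nonneg_left _ (by positivity)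
      apply mul_le_mul_of_nonneg_left hTρτ hγ'0.le
    have h6 : (c₁ * (τ ^ N)⁻¹) * 2 * (γ' * (ρ ^ N * τ ^ N)) = 2 * c₁ * ρ ^ N * γ' := by
      field_simp
    have h7 : (N:ℝ) * (2 * c₁ * ρ ^ N * γ') = 1 := by
      rw [hγ']
      field_simp
    calc (N:ℝ) * ‖w‖ ≤ N * (2 * c₁ * ρ ^ N * γ') := by
          apply mul_le_mul_of_nonneg_left _ hN0.le
          rw [← h6]
          exact le_trans h4 h5
      _ = 1 := h7
  have hwk : ∀ k, |w k| ≤ ‖w‖ := by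
    intro k
    rw [← Real.norm_eq_abs]
    exact norm_le_pi_norm w k
  -- the control
  set g : ℝ → ℝ := fun s => ∑ k : Fin N, (Set.Ioc (T - t k) T).indicator (fun _ => w k) s
    with hg
  clear_value g
  set u : ℝ → (Fin M → ℝ) := fun s j => if j = i₀ then g s else 0 with hu
  clear_value u
  have hgbound : ∀ s, |g s| ≤ 1 := by
    intro s
    rw [hg]
    calc |∑ k : Fin N, (Set.Ioc (T - t k) T).indicator (fun _ => w k) s| ≤ ∑ k : Fin N, |(Set.Ioc (T - t k) T).indicator (fun _ => w k) s| :=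
          Finset.abs_sum_le_sum_abs _ _
      _ ≤ ∑ _k : Fin N, ‖w‖ := by
          apply Finset.sum_le_sum
          intro k _
          by_cases hks : s ∈ Set.Ioc (T - t k) T
          · rw [Set.indicator_of_mem hks]
            exact hwk k
          · rw [Set.indicator_of_notMem hks]
            simp [norm_nonneg]
      _ = N * ‖w‖ := by simp [Finset.sum_const, nsmul_eq_mul]
      _ ≤ 1 := hwnorm
  have hadm : IsAdmissible M u := by
    constructor
    · apply measurable_pi_lambda
      intro j
      by_cases hj : j = i₀
      · simp only [hu, hj, if_pos rfl, hg]
        apply Finset.measurable_sum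
        intro k _
        exact (measurable_const.indicator measurableSet_Ioc)
      · simp only [hu, hj, if_neg hj]
        exact measurable_const
    · intro s j
      by_cases hj : j = i₀
      · have husj : u s j = g s := by rw [hu]; simp [hj]
        rw [husj]
        have hb2 := hgbound s
        rw [abs_le] at hb2
        exact ⟨hb2.1, hb2.2⟩
      · have husj : u s j = 0 := by rw [hu]; simp [hj]
        rw [husj]
        constructor <;> norm_num
  refine ⟨u, hadm, ?_⟩
  -- the integral identity
  have hint : (∫ s in (0:ℝ)..T, (NormedSpace.exp ((T - s) • A)).mulVec (B.mulVec (u s)))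
      = L *ᵥ w := by
    have hbu : ∀ s, B *ᵥ (u s) = g s • b := by
      intro s
      funext i
      have hval : ∀ j, u s j = if j = i₀ then g s else 0 := fun j => by rw [hu]
      simp only [Matrix.mulVec, dotProduct]
      rw [Finset.sum_eq_single i₀]
      · rw [hval i₀, if_pos rfl, hbdef]
        simp [mul_comm]
      · intro j _ hj
        rw [hval j, if_neg hj, mul_zero]
      · intro h
        exact absurd (Finset.mem_univ i₀) h
    have hintegrand : ∀ s, (NormedSpace.exp ((T - s) • A)) *ᵥ (B *ᵥ u s)
        = ∑ k : Fin N, (Set.Ioc (T - t k) T).indicator (fun s' => w k • f (T - s')) s := by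
      intro s
      rw [hbu s, Matrix.mulVec_smul]
      have hfs : (NormedSpace.exp ((T - s) • A)) *ᵥ b = f (T - s) := by rw [hf]
      rw [hfs]
      simp only [hg]
      rw [Finset.sum_smul]
      apply Finset.sum_congr rfl
      intro k _
      by_cases hk : s ∈ Set.Ioc (T - t k) T
      · rw [Set.indicator_of_mem hk, Set.indicator_of_mem hk]
      · rw [Set.indicator_of_notMem hk, Set.indicator_of_notMem hk, zero_smul]
    have hFk : ∀ k : Fin N, IntervalIntegrable
        (fun s => (Set.Ioc (T - t k) T).indicator (fun s' => w k • f (T - s')) s)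
        MeasureTheory.volume 0 T := by
      intro k
      have hcont : Continuous (fun s' => w k • f (T - s')) :=
        (hfc.comp (continuous_sub_left T)).const_smul (w k)
      rw [intervalIntegrable_iff_integrableOn_Ioc_of_le hT.le]
      exact (hcont.integrableOn_Ioc).indicator measurableSet_Ioc
    calc (∫ s in (0:ℝ)..T, (NormedSpace.exp ((T - s) • A)).mulVec (B.mulVec (u s)))
        = ∫ s in (0:ℝ)..T,
            ∑ k : Fin N, (Set.Ioc (T - t k) T).indicator (fun s' => w k • f (T - s')) s := by
          apply intervalIntegral.integral_congr
          intro s _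
          exact hintegrand s
      _ = ∑ k : Fin N, ∫ s in (0:ℝ)..T,
            (Set.Ioc (T - t k) T).indicator (fun s' => w k • f (T - s')) s :=
          intervalIntegral.integral_finset_sum (fun k _ => hFk k)
      _ = ∑ k : Fin N, w k • v k := by
          apply Finset.sum_congr rfl
          intro k _
          have htk0 : 0 ≤ T - t k := by
            have h1 := htτ k
            have h2 := ht0 k
            linarith
          have h1 : Set.Ioc (T - t k) T ⊆ Set.Ioc 0 T := Set.Ioc_subset_Ioc_left htk0
          rw [intervalIntegral.integral_of_le hT.le,
            MeasureTheory.setIntegral_indicator measurableSet_Ioc,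
            Set.inter_eq_self_of_subset_right h1,
            ← intervalIntegral.integral_of_le (show T - t k ≤ T by linarith [ht0 k]),
            intervalIntegral.integral_smul]
          congr 1
          have hcv := intervalIntegral.integral_comp_sub_left (a := T - t k) (b := T) f T
          rw [hcv, sub_self, sub_sub_cancel, hv]
      _ = L *ᵥ w := by
          funext i
          simp only [Matrix.mulVec, dotProduct, hL, Matrix.of_apply, Finset.sum_apply,
            Pi.smul_apply, smul_eq_mul]
          apply Finset.sum_congr rfl
          intro k _
          ring
  rw [hint, hxLw]
end
end

section
/- Fix N ≥ 2 and T > 0. Consider the single-input linear system in ℝ^N given by ẋ_i = x_{i+1} for i = 1, …, N−1 and ẋ_N = u with u(t) ∈ [−1,1], starting from the origin (equivalently, the scalar equation x^{(N)} = u). Let X_1(·) be the trajectory corresponding to u ≡ 1 and, for 0 < s < T, let X_s(·) be the trajectory corresponding to the control equal to 1 on (0,s) and to −1 on (s,T). Then the first component satisfies ⟨e_1, X_s(T) − X_1(T)⟩ = −(2/N!. )(T−s)^N and the last component satisfies ⟨e_N, X_s(T) − X_1(T)⟩ = −2(T−s), so that ‖X_s(T) − X_1(T)‖ ≥ 2(T−s).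 Consequently, for every γ > 0 and every real p with 1 ≤ p < N there exists s ∈ (0,T) such that ⟨e_1, X_s(T) − X_1(T)⟩ > −γ ‖X_s(T) − X_1(T)‖^p; hence the exponent N in the strict convexity estimate ⟨ζ, y−x⟩ ≤ −γ‖ζ‖‖y−x‖^N for reachable sets of normal linear systems is optimal. -/
noncomputable section
open MeasureTheory

/-- A trajectory of the companion system of `x^{(N)} = u` on `[0,T]`:
`ẋ_i = x_{i+1}` for `i < N-1`, `ẋ_{N-1} = u`, `x(0) = 0`, written in
absolutely continuous (integral) form. -/
def IsCompanionTraj (N : ℕ) (T : ℝ) (u : ℝ → ℝ) (x : ℝ → Fin N → ℝ) : Prop :=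
  Continuous x ∧ x 0 = 0 ∧
    ∀ τ ∈ Set.Icc (0 : ℝ) T, ∀ i : Fin N,
      x τ i = ∫ t in (0:ℝ)..τ, (if h : (i : ℕ) + 1 < N then x t ⟨(i : ℕ) + 1, h⟩ else u t)

lemma ctrlAntitone (s : ℝ) : Antitone (fun t => if t < s then (1:ℝ) else -1) := by
  intro a b hab
  by_cases ha : a < s
  · by_cases hb : b < s <;> simp [ha, hb] <;> norm_num
  · have hb : ¬ b < s := fun h => ha (lt_of_le_of_lt hab h)
    simp [ha, hb]

lemma stepAntitone (s : ℝ) : Antitone (fun t => if t < s then (0:ℝ) else -2) := by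
  intro a b hab
  by_cases ha : a < s
  · by_cases hb : b < s <;> simp [ha, hb] <;> norm_num
  · have hb : ¬ b < s := fun h => ha (lt_of_le_of_lt hab h)
    simp [ha, hb]

/-- The step function `if t < s then 0 else -2` integrates to `-2 max(τ-s,0)`. -/
lemma stepIntegral (s τ : ℝ) (hs : 0 ≤ s) (hτ : 0 ≤ τ) :
    ∫ t in (0:ℝ)..τ, (if t < s then (0:ℝ) else -2) = -2 * max (τ - s) 0 := by
  have hzero : ∀ b : ℝ, b ≤ s → 0 ≤ b →
      ∫ t in (0:ℝ)..b, (if t < s then (0:ℝ) else -2) = 0 := by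
    intro b hbs hb0
    rw [intervalIntegral.integral_congr_ae (g := fun _ => (0:ℝ)) ?_,
      intervalIntegral.integral_zero]
    have hnull : (volume : Measure ℝ) {s} = 0 := measure_singleton s
    rw [Filter.eventually_iff, mem_ae_iff]
    apply measure_mono_null _ hnull
    intro x hx
    simp only [Set.mem_compl_iff, Set.mem_setOf_eq, Classical.not_imp] at hx
    obtain ⟨hx1, hx2⟩ := hx
    rw [Set.uIoc_of_le hb0] at hx1
    by_cases h : x < s
    · simp [h] at hx2
    · have : s ≤ x := not_lt.mp h
      have : x = s := le_antisymm (hx1.2.trans hbs) this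
      simp [this]
  rcases le_or_gt τ s with h | h
  · rw [hzero τ h hτ, max_eq_right (by linarith), mul_zero]
  · have hi1 : IntervalIntegrable (fun t => if t < s then (0:ℝ) else -2) volume 0 s :=
      (stepAntitone s).intervalIntegrable
    have hi2 : IntervalIntegrable (fun t => if t < s then (0:ℝ) else -2) volume s τ :=
      (stepAntitone s).intervalIntegrable
    rw [← intervalIntegral.integral_add_adjacent_intervals hi1 hi2, hzero s le_rfl hs]
    rw [intervalIntegral.integral_congr (g := fun _ => (-2:ℝ)) ?_]
    · rw [intervalIntegral.integral_const, max_eq_left (by linarith), smul_eq_mul]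
      ring
    · intro x hx
      rw [Set.uIcc_of_le h.le] at hx
      have : ¬ x < s := not_lt.mpr hx.1
      simp [this]

/-- Integral of `-2 max(t-s,0)^m / m!` from `0` to `τ`. -/
lemma powIntegral (s τ : ℝ) (m : ℕ) (hm : 1 ≤ m) (hs : 0 ≤ s) (hτ : 0 ≤ τ) :
    ∫ t in (0:ℝ)..τ, (-2 * max (t - s) 0 ^ m / (m.factorial : ℝ)) =
      -2 * max (τ - s) 0 ^ (m + 1) / ((m + 1).factorial : ℝ) := by
  have hcont : Continuous fun t : ℝ => -2 * max (t - s) 0 ^ m / (m.factorial : ℝ) := by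
    apply Continuous.div_const
    exact (continuous_const.mul (((continuous_id.sub continuous_const).max continuous_const).pow m))
  have hzero : ∀ b : ℝ, b ≤ s → 0 ≤ b →
      ∫ t in (0:ℝ)..b, (-2 * max (t - s) 0 ^ m / (m.factorial : ℝ)) = 0 := by
    intro b hbs hb0
    rw [intervalIntegral.integral_congr (g := fun _ => (0:ℝ)) ?_,
      intervalIntegral.integral_zero]
    intro x hx
    rw [Set.uIcc_of_le hb0] at hx
    have : max (x - s) 0 = 0 := max_eq_right (by linarith [hx.2])
    simp [this, zero_pow (by omega : m ≠ 0)]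
  rcases le_or_gt τ s with h | h
  · rw [hzero τ h hτ, max_eq_right (by linarith), zero_pow (by omega : m + 1 ≠ 0)]
    ring
  · rw [← intervalIntegral.integral_add_adjacent_intervals (b := s)
      (hcont.intervalIntegrable 0 s) (hcont.intervalIntegrable s τ), hzero s le_rfl hs]
    have heq : ∫ t in s..τ, (-2 * max (t - s) 0 ^ m / (m.factorial : ℝ)) =
        ∫ t in s..τ, ((-2 / (m.factorial : ℝ)) * ((fun y : ℝ => y ^ m) (t - s))) := by
      apply intervalIntegral.integral_congr
      intro x hx
      rw [Set.uIcc_of_le h.le] at hx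
      have hmx : max (x - s) 0 = x - s := max_eq_left (by linarith [hx.1])
      dsimp only
      rw [hmx]; ring
    rw [heq, intervalIntegral.integral_const_mul,
      intervalIntegral.integral_comp_sub_right (fun y : ℝ => y ^ m) s, sub_self,
      integral_pow]
    have hfact : ((m + 1).factorial : ℝ) = (m + 1) * (m.factorial : ℝ) := by
      rw [Nat.factorial_succ]; push_cast; ring
    have hm0 : (m.factorial : ℝ) ≠ 0 := Nat.cast_ne_zero.mpr (Nat.factorial_ne_zero m)
    have hm1 : ((m : ℝ) + 1) ≠ 0 := by positivity
    rw [max_eq_left (by linarith), hfact, zero_pow (by omega : m + 1 ≠ 0), sub_zero,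
      zero_add]
    push_cast
    rw [div_mul_div_comm, mul_comm ((m.factorial : ℝ))]

/-- optimality of the exponent `N`.  For the system
`x^{(N)} = u`, let `X1` be the trajectory of the control `u ≡ 1` and, for
`0 < s < T`, let `X s` be the trajectory of the control equal to `1` on
`(0,s)` and `-1` on `(s,T)`.  Then
`⟨e₁, X s T - X1 T⟩ = -(2/N!) (T-s)^N`, `⟨e_N, X s T - X1 T⟩ = -2(T-s)`,
hence `‖X s T - X1 T‖ ≥ 2(T-s)`; consequently for every `γ > 0` and every
real `1 ≤ p < N` there is `s ∈ (0,T)` with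
`⟨e₁, X s T - X1 T⟩ > -γ ‖X s T - X1 T‖^p`. -/
theorem exponent_N_is_optimal
    (N : ℕ) (hN : 2 ≤ N) (T : ℝ) (hT : 0 < T)
    (X1 : ℝ → Fin N → ℝ) (X : ℝ → ℝ → Fin N → ℝ)
    (hX1 : IsCompanionTraj N T (fun _ => 1) X1)
    (hX : ∀ s ∈ Set.Ioo (0 : ℝ) T,
      IsCompanionTraj N T (fun t => if t < s then 1 else -1) (X s)) :
    (∀ s ∈ Set.Ioo (0 : ℝ) T,
      (X s T - X1 T) ⟨0, by omega⟩ = -(2 / (N.factorial : ℝ)) * (T - s) ^ N ∧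
      (X s T - X1 T) ⟨N - 1, by omega⟩ = -2 * (T - s) ∧
      2 * (T - s) ≤ euNorm (X s T - X1 T)) ∧
    ∀ γ : ℝ, 0 < γ → ∀ p : ℝ, 1 ≤ p → p < N →
      ∃ s ∈ Set.Ioo (0 : ℝ) T,
        -γ * euNorm (X s T - X1 T) ^ p < (X s T - X1 T) ⟨0, by omega⟩ := by
  obtain ⟨hc1, -, heq1⟩ := hX1
  have key : ∀ s ∈ Set.Ioo (0:ℝ) T, ∀ k : ℕ, k ≤ N - 1 → ∀ τ ∈ Set.Icc (0:ℝ) T,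
      X s τ ⟨N - 1 - k, by omega⟩ - X1 τ ⟨N - 1 - k, by omega⟩
        = -2 * max (τ - s) 0 ^ (k + 1) / ((k + 1).factorial : ℝ) := by
    intro s hs k
    induction k with
    | zero =>
      intro _ τ hτ
      simp only [Nat.sub_zero]
      have hnot : ¬ ((N - 1 : ℕ) + 1 < N) := by omega
      have e_s := (hX s hs).2.2 τ hτ ⟨N - 1, by omega⟩
      have e_1 := heq1 τ hτ ⟨N - 1, by omega⟩
      simp only [dif_neg hnot] at e_s e_1
      have hint1 : IntervalIntegrable (fun t => if t < s then (1:ℝ) else -1) volume 0 τ :=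
        (ctrlAntitone s).intervalIntegrable
      have hint2 : IntervalIntegrable (fun _ : ℝ => (1:ℝ)) volume 0 τ :=
        intervalIntegrable_const
      rw [e_s, e_1, ← intervalIntegral.integral_sub hint1 hint2]
      have hfun : (fun t => (if t < s then (1:ℝ) else -1) - 1)
          = fun t => if t < s then (0:ℝ) else -2 := by
        funext t; split_ifs <;> ring
      rw [hfun, stepIntegral s τ hs.1.le hτ.1]
      simp [Nat.factorial]
    | succ k ih =>
      intro hk τ hτ
      have hlt : (N - 1 - (k + 1) : ℕ) + 1 < N := by omega
      have e_s := (hX s hs).2.2 τ hτ ⟨N - 1 - (k + 1), by omega⟩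
      have e_1 := heq1 τ hτ ⟨N - 1 - (k + 1), by omega⟩
      simp only [dif_pos hlt] at e_s e_1
      have hidx : (N - 1 - (k + 1) : ℕ) + 1 = N - 1 - k := by omega
      simp only [hidx] at e_s e_1
      have hcs : Continuous fun t => X s t ⟨N - 1 - k, by omega⟩ :=
        (continuous_apply _).comp (hX s hs).1
      have hc1' : Continuous fun t => X1 t ⟨N - 1 - k, by omega⟩ :=
        (continuous_apply _).comp hc1
      rw [e_s, e_1, ← intervalIntegral.integral_sub (hcs.intervalIntegrable 0 τ)
        (hc1'.intervalIntegrable 0 τ)]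
      rw [intervalIntegral.integral_congr
        (g := fun t => -2 * max (t - s) 0 ^ (k + 1) / ((k + 1).factorial : ℝ)) ?_]
      · exact powIntegral s τ (k + 1) (by omega) hs.1.le hτ.1
      · intro x hx
        rw [Set.uIcc_of_le hτ.1] at hx
        exact ih (by omega) x ⟨hx.1, hx.2.trans hτ.2⟩
  have main : ∀ s ∈ Set.Ioo (0:ℝ) T,
      (X s T - X1 T) ⟨0, by omega⟩ = -(2 / (N.factorial : ℝ)) * (T - s) ^ N ∧
      (X s T - X1 T) ⟨N - 1, by omega⟩ = -2 * (T - s) ∧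
      2 * (T - s) ≤ euNorm (X s T - X1 T) := by
    intro s hs
    have hTs : 0 ≤ T - s := by linarith [hs.2]
    have hmax : max (T - s) 0 = T - s := max_eq_left hTs
    have hTmem : T ∈ Set.Icc (0:ℝ) T := ⟨hT.le, le_rfl⟩
    have hk1 := key s hs (N - 1) le_rfl T hTmem
    have hk0 := key s hs 0 (by omega) T hTmem
    have hN1 : (N - 1 : ℕ) - (N - 1) = 0 := by omega
    have hN2 : (N - 1 : ℕ) + 1 = N := by omega
    simp only [hN1, hN2, hmax] at hk1
    simp only [Nat.sub_zero, hmax] at hk0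
    have hfac : (N.factorial : ℝ) ≠ 0 := Nat.cast_ne_zero.mpr (Nat.factorial_ne_zero N)
    have h0 : (X s T - X1 T) ⟨0, by omega⟩ = -(2 / (N.factorial : ℝ)) * (T - s) ^ N := by
      rw [Pi.sub_apply, hk1]; field_simp
    have hlast : (X s T - X1 T) ⟨N - 1, by omega⟩ = -2 * (T - s) := by
      rw [Pi.sub_apply, hk0]
      simp [Nat.factorial]
    refine ⟨h0, hlast, ?_⟩
    have habs : |(X s T - X1 T) ⟨N - 1, by omega⟩| ≤ euNorm (X s T - X1 T) := by
      unfold euNorm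
      rw [← Real.sqrt_sq_eq_abs]
      apply Real.sqrt_le_sqrt
      exact Finset.single_le_sum (f := fun i => ((X s T - X1 T) i) ^ 2)
        (fun i _ => sq_nonneg _) (Finset.mem_univ _)
    rw [hlast] at habs
    rw [abs_of_nonpos (by linarith)] at habs
    linarith [habs]
  refine ⟨main, ?_⟩
  intro γ hγ p hp1 hpN
  have hpN' : p < (N : ℝ) := hpN
  have hNp : 0 < (N : ℝ) - p := by linarith
  have hfacpos : (0:ℝ) < (N.factorial : ℝ) := by
    exact_mod_cast N.factorial_pos
  have h2p : (0:ℝ) < (2:ℝ) ^ p := Real.rpow_pos_of_pos (by norm_num) p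
  set c : ℝ := γ * 2 ^ p * (N.factorial : ℝ) / 2 with hcdef
  have hc0 : 0 < c := by positivity
  set δ : ℝ := c ^ (((N : ℝ) - p)⁻¹) with hδdef
  have hδ0 : 0 < δ := Real.rpow_pos_of_pos hc0 _
  set ε : ℝ := min (T / 2) (δ / 2) with hεdef
  have hε0 : 0 < ε := lt_min (by linarith) (by linarith)
  have hεT : ε < T := lt_of_le_of_lt (min_le_left _ _) (by linarith)
  have hεδ : ε < δ := lt_of_le_of_lt (min_le_right _ _) (by linarith)
  refine ⟨T - ε, ⟨by linarith, by linarith⟩, ?_⟩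
  obtain ⟨h0, -, hnorm⟩ := main (T - ε) ⟨by linarith, by linarith⟩
  have hTe : T - (T - ε) = ε := by ring
  rw [hTe] at h0 hnorm
  rw [h0]
  set D : ℝ := euNorm (X (T - ε) T - X1 T) with hD
  have hDpos : 0 < D := lt_of_lt_of_le (by linarith) hnorm
  have h1 : (2 * ε) ^ p ≤ D ^ p := Real.rpow_le_rpow (by linarith) hnorm (by linarith)
  have h2e : (2 * ε) ^ p = 2 ^ p * ε ^ p := Real.mul_rpow (by norm_num) hε0.le
  have hεp : (0:ℝ) < ε ^ p := Real.rpow_pos_of_pos hε0 p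
  have hεN : (ε : ℝ) ^ N = ε ^ p * ε ^ ((N : ℝ) - p) := by
    rw [← Real.rpow_natCast ε N, ← Real.rpow_add hε0]
    norm_num
  have hεsmall : ε ^ ((N : ℝ) - p) < c := by
    have h1' : ε ^ ((N : ℝ) - p) < δ ^ ((N : ℝ) - p) :=
      Real.rpow_lt_rpow hε0.le hεδ hNp
    have h2' : δ ^ ((N : ℝ) - p) = c := by
      rw [hδdef, ← Real.rpow_mul hc0.le, inv_mul_cancel₀ hNp.ne', Real.rpow_one]
    rw [h2'] at h1'
    exact h1'
  have hkey : (2 / (N.factorial : ℝ)) * ε ^ N < γ * D ^ p := by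
    have step1 : (2 / (N.factorial : ℝ)) * ε ^ N < (2 / (N.factorial : ℝ)) * (ε ^ p * c) := by
      rw [hεN]
      apply mul_lt_mul_of_pos_left _ (by positivity)
      exact mul_lt_mul_of_pos_left hεsmall hεp
    have step2 : (2 / (N.factorial : ℝ)) * (ε ^ p * c) = γ * (2 ^ p * ε ^ p) := by
      rw [hcdef]; field_simp
    have step3 : γ * (2 ^ p * ε ^ p) ≤ γ * D ^ p := by
      apply mul_le_mul_of_nonneg_left _ hγ.le
      rw [← h2e]; exact h1
    linarith
  linarith
end
end

section
/- Consider the two-dimensional control system ẋ₁(t) = x₂(t)(1 + u(t)), ẋ₂(t) = u(t), x(0) = 0, with measurable controls u valued in [−1,1] (i.e., F(x₁,x₂) = (x₂, 0) and G(x₁,x₂) = (x₂, 1), which satisfy F(0) = 0 and rank[G(0), DF(0)G(0)] = 2 but not DG(0) = 0). For τ > 0 let 𝓡^τ be the reachable set from the origin at time τ. Then for every 0 < s < 1 the point γ(s) = (s²τ², τ(2s − 1)) belongs to 𝓡^τ (reached by the control equal to 1 on (0, sτ) and −1 on (sτ, τ)), the point γ(1/2) belongs to the boundary of 𝓡^τ,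 and with ζ = (2, −τ)/√(4 + τ²) one has ⟨ζ, γ(s) − γ(1/2)⟩ = 2τ²(s − 1/2)²/√(4 + τ²) > 0 for s ≠ 1/2. Consequently, the reachable set 𝓡^τ is not convex for any τ > 0. -/
noncomputable section
open MeasureTheory

/-- Carathéodory trajectory (in integral form) of `ẏ = F(y) + G(y)u`,
`y(0) = x₀`, on `[0,τ]`; the columns of `G` are `G i`. -/
def IsNLTraj {N M : ℕ} (F : (Fin N → ℝ) → Fin N → ℝ)
    (G : Fin M → (Fin N → ℝ) → Fin N → ℝ) (τ : ℝ) (u : ℝ → Fin M → ℝ)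
    (x₀ : Fin N → ℝ) (y : ℝ → Fin N → ℝ) : Prop :=
  Continuous y ∧ y 0 = x₀ ∧
    ∀ t ∈ Set.Icc (0 : ℝ) τ,
      y t = x₀ + ∫ r in (0:ℝ)..t, (F (y r) + ∑ i, u r i • G i (y r))

/-- The reachable set from the origin at time `τ`. -/
def nlReach {N M : ℕ} (F : (Fin N → ℝ) → Fin N → ℝ)
    (G : Fin M → (Fin N → ℝ) → Fin N → ℝ) (τ : ℝ) : Set (Fin N → ℝ) :=
  {p | ∃ u y, IsAdmissible M u ∧ IsNLTraj F G τ u 0 y ∧ p = y τ}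

/-- The proximal normal cone to `K` at `x`. -/
def proxNormalCone {N : ℕ} (K : Set (Fin N → ℝ)) (x : Fin N → ℝ) : Set (Fin N → ℝ) :=
  {v | ∃ σ : ℝ, 0 ≤ σ ∧ ∀ y ∈ K, euDot v (y - x) ≤ σ * euNorm (y - x) ^ 2}

theorem myIntegrableOn {f : ℝ → ℝ} (hf : Measurable f) {C : ℝ} {a b : ℝ}
    (hC : ∀ r ∈ Set.uIcc a b, |f r| ≤ C) : IntervalIntegrable f volume a b := by
  rw [intervalIntegrable_iff]
  have : IsFiniteMeasure (volume.restrict (Set.uIoc a b)) :=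
    ⟨by rw [Measure.restrict_apply_univ]; exact measure_Ioc_lt_top⟩
  refine Integrable.mono' (integrable_const C) hf.aestronglyMeasurable ?_
  refine (ae_restrict_iff' measurableSet_uIoc).2 (Filter.Eventually.of_forall fun r hr => ?_)
  simpa using hC r (Set.uIoc_subset_uIcc hr)

theorem pairInt {g h : ℝ → ℝ} {a b : ℝ} (hg : IntervalIntegrable g volume a b)
    (hh : IntervalIntegrable h volume a b) :
    (∫ r in a..b, (![g r, h r] : Fin 2 → ℝ)) =
      ![∫ r in a..b, g r, ∫ r in a..b, h r] := by
  have e : (fun r => (![g r, h r] : Fin 2 → ℝ))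
      = fun r => g r • (![1,0] : Fin 2 → ℝ) + h r • ![0,1] := by
    funext r i; fin_cases i <;> simp
  rw [e, intervalIntegral.integral_add ⟨hg.1.smul_const _, hg.2.smul_const _⟩
      ⟨hh.1.smul_const _, hh.2.smul_const _⟩,
    intervalIntegral.integral_smul_const, intervalIntegral.integral_smul_const]
  funext i; fin_cases i <;> simp

theorem selfconv {u : ℝ → ℝ} (hm : Measurable u) (hb : ∀ r, |u r| ≤ 1)
    {τ : ℝ} (hτ : 0 ≤ τ) :
    ∫ t in (0:ℝ)..τ, (∫ r in (0:ℝ)..t, u r) * u t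
      = (∫ t in (0:ℝ)..τ, u t) ^ 2 / 2 := by
  set ν := volume.restrict (Set.Ioc (0:ℝ) τ) with hν
  have hfin : IsFiniteMeasure ν :=
    ⟨by rw [hν, Measure.restrict_apply_univ]; exact measure_Ioc_lt_top⟩
  set F2 : ℝ → ℝ → ℝ := fun t s => if s ≤ t then u s * u t else 0 with hF2
  set W : ℝ → ℝ := fun s => ∫ r in (0:ℝ)..s, u r with hWdef
  set A : ℝ := ∫ t in Set.Ioc (0:ℝ) τ, u t with hA
  have hint : ∀ a b : ℝ, IntegrableOn u (Set.Ioc a b) := by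
    intro a b
    have : IsFiniteMeasure (volume.restrict (Set.Ioc a b)) :=
      ⟨by rw [Measure.restrict_apply_univ]; exact measure_Ioc_lt_top⟩
    refine Integrable.mono' (integrable_const 1) hm.aestronglyMeasurable ?_
    exact Filter.Eventually.of_forall fun r => by simpa using hb r
  have hii : ∀ a b : ℝ, IntervalIntegrable u volume a b := fun a b =>
    myIntegrableOn hm (fun r _ => hb r)
  have hWcont : Continuous W := intervalIntegral.continuous_primitive (fun a b => hii a b) 0
  have hWeq : ∀ s : ℝ, 0 ≤ s → W s = ∫ r in Set.Ioc (0:ℝ) s, u r := fun s hs =>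
    intervalIntegral.integral_of_le hs
  have hWbd : ∀ s ∈ Set.Ioc (0:ℝ) τ, |W s| ≤ τ := by
    intro s hs
    have : ‖∫ r in (0:ℝ)..s, u r‖ ≤ 1 * |s - 0| := by
      refine intervalIntegral.norm_integral_le_of_norm_le_const fun r _ => ?_
      simpa using hb r
    have h2 : (1:ℝ) * |s - 0| ≤ τ := by
      rw [sub_zero, abs_of_pos hs.1]; linarith [hs.2]
    simpa using this.trans h2
  -- inner integral computations
  have hK1 : (∫ t, (∫ s, F2 t s ∂ν) ∂ν) = ∫ t in Set.Ioc (0:ℝ) τ, W t * u t := by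
    refine setIntegral_congr_fun measurableSet_Ioc fun t ht => ?_
    have e1 : (fun s => F2 t s) = (Set.Iic t).indicator (fun s => u s * u t) := by
      funext s
      by_cases h : s ≤ t <;>
        simp [hF2, h, Set.indicator_of_mem, Set.indicator_of_notMem, Set.mem_Iic]
    rw [e1, setIntegral_indicator measurableSet_Iic]
    have e2 : Set.Ioc (0:ℝ) τ ∩ Set.Iic t = Set.Ioc 0 t := by
      ext s; simp only [Set.mem_inter_iff, Set.mem_Ioc, Set.mem_Iic]
      exact ⟨fun ⟨⟨h1, _⟩, h3⟩ => ⟨h1, h3⟩, fun ⟨h1, h3⟩ => ⟨⟨h1, h3.trans ht.2⟩, h3⟩⟩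
    rw [e2, integral_mul_const, ← hWeq t (le_of_lt ht.1)]
  have hK2 : (∫ s, (∫ t, F2 t s ∂ν) ∂ν) = ∫ s in Set.Ioc (0:ℝ) τ, u s * (A - W s) := by
    refine setIntegral_congr_fun measurableSet_Ioc fun s hs => ?_
    have e1 : (fun t => F2 t s) = (Set.Ici s).indicator (fun t => u s * u t) := by
      funext t
      by_cases h : s ≤ t <;>
        simp [hF2, h, Set.indicator_of_mem, Set.indicator_of_notMem, Set.mem_Ici]
    rw [e1, setIntegral_indicator measurableSet_Ici]
    have e3 : ∫ t in Set.Ioc (0:ℝ) τ ∩ Set.Ici s, u s * u t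
        = ∫ t in Set.Ioc s τ, u s * u t := by
      refine setIntegral_congr_set ?_
      have h0 : ({s} ∩ Set.Ioc 0 τ : Set ℝ) =ᵐ[volume] (∅ : Set ℝ) :=
        ae_eq_empty.2 (measure_mono_null Set.inter_subset_left (measure_singleton s))
      have e2 : Set.Ioc (0:ℝ) τ ∩ Set.Ici s = Set.Ioc s τ ∪ {s} ∩ Set.Ioc 0 τ := by
        ext t; simp only [Set.mem_inter_iff, Set.mem_Ioc, Set.mem_Ici, Set.mem_union,
          Set.mem_singleton_iff]
        constructor
        · rintro ⟨⟨h1, h2⟩, h3⟩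
          rcases eq_or_lt_of_le h3 with h | h
          · exact Or.inr ⟨h.symm, h1, h2⟩
          · exact Or.inl ⟨h, h2⟩
        · rintro (⟨h1, h2⟩ | ⟨h1, h2, h3⟩)
          · exact ⟨⟨hs.1.trans h1, h2⟩, le_of_lt h1⟩
          · exact ⟨⟨h2, h3⟩, le_of_eq h1.symm⟩
      rw [e2]
      simpa using Filter.EventuallyEq.union (ae_eq_refl (Set.Ioc s τ : Set ℝ)) h0
    rw [e3, integral_const_mul]
    congr 1
    have hsplit : A = (∫ r in Set.Ioc (0:ℝ) s, u r) + ∫ r in Set.Ioc s τ, u r := by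
      rw [hA, ← setIntegral_union ?_ measurableSet_Ioc (hint 0 s) (hint s τ)]
      · rw [Set.Ioc_union_Ioc_eq_Ioc (le_of_lt hs.1) hs.2]
      · rw [Set.disjoint_left]; intro x hx hx'; exact absurd hx'.1 (not_lt.2 hx.2)
    rw [hWeq s (le_of_lt hs.1)]
    linarith [hsplit]
  -- Fubini
  have hswap : (∫ t, (∫ s, F2 t s ∂ν) ∂ν) = (∫ s, (∫ t, F2 t s ∂ν) ∂ν) := by
    have hmeas : Measurable (Function.uncurry F2) := by
      have : Measurable fun p : ℝ × ℝ => u p.2 * u p.1 :=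
        (hm.comp measurable_snd).mul (hm.comp measurable_fst)
      exact Measurable.ite (measurableSet_le measurable_snd measurable_fst) this
        measurable_const
    have hintF : Integrable (Function.uncurry F2) (ν.prod ν) := by
      refine Integrable.mono' (integrable_const 1) hmeas.aestronglyMeasurable ?_
      refine Filter.Eventually.of_forall fun p => ?_
      simp only [Function.uncurry, hF2]
      split
      · calc ‖u p.2 * u p.1‖ = |u p.2| * |u p.1| := by rw [norm_mul]; rfl
          _ ≤ 1 * 1 := mul_le_mul (hb _) (hb _) (abs_nonneg _) zero_le_one
          _ = 1 := one_mul 1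
      · simp
    exact integral_integral_swap hintF
  -- integrability of W * u on Ioc 0 τ
  have hWu : IntegrableOn (fun s => W s * u s) (Set.Ioc (0:ℝ) τ) := by
    refine Integrable.mono' (integrable_const τ)
      ((hWcont.measurable.mul hm).aestronglyMeasurable) ?_
    refine (ae_restrict_iff' measurableSet_Ioc).2 (Filter.Eventually.of_forall fun s hs => ?_)
    calc ‖W s * u s‖ = |W s| * |u s| := by rw [norm_mul]; rfl
      _ ≤ τ * 1 := mul_le_mul (hWbd s hs) (hb s) (abs_nonneg _)
          (le_trans (abs_nonneg _) (hWbd s hs))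
      _ = τ := mul_one τ
  -- assemble
  have key : (∫ t in Set.Ioc (0:ℝ) τ, W t * u t) = A ^ 2 / 2 := by
    have h2 : (∫ t in Set.Ioc (0:ℝ) τ, W t * u t)
        = ∫ s in Set.Ioc (0:ℝ) τ, u s * (A - W s) := by
      rw [← hK1, hswap, hK2]
    have h3 : (∫ s in Set.Ioc (0:ℝ) τ, u s * (A - W s))
        = A * A - ∫ s in Set.Ioc (0:ℝ) τ, W s * u s := by
      have e : ∀ s, u s * (A - W s) = u s * A - W s * u s := fun s => by ring
      simp_rw [e]
      rw [MeasureTheory.integral_sub ((hint 0 τ).mul_const A) hWu]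
      congr 1
      rw [integral_mul_const]
    rw [h3] at h2
    nlinarith [h2]
  rw [intervalIntegral.integral_of_le hτ, intervalIntegral.integral_of_le hτ]
  exact key.trans (by rw [hA])

theorem keyIneq {τ : ℝ} (hτ : 0 < τ) {p : Fin 2 → ℝ}
    (hp : p ∈ nlReach (fun x : Fin 2 → ℝ => ![x 1, 0]) (fun (_ : Fin 1) (x : Fin 2 → ℝ) => ![x 1, 1]) τ) :
    2 * p 0 - τ * p 1 ≤ τ ^ 2 / 2 + p 1 ^ 2 / 2 := by
  obtain ⟨u, y, hadm, htraj, hpy⟩ := hp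
  obtain ⟨hycont, hy0, hyint⟩ := htraj
  set u₀ : ℝ → ℝ := fun t => u t 0 with hu₀
  have hm : Measurable u₀ := (measurable_pi_apply 0).comp hadm.1
  have hb : ∀ r, |u₀ r| ≤ 1 := fun r => abs_le.2 ⟨(hadm.2 r 0).1, (hadm.2 r 0).2⟩
  have hy1cont : Continuous fun r => y r 1 := (continuous_apply 1).comp hycont
  -- bound for y · 1 on [0,τ]
  obtain ⟨Cm, hCmem, hCm'⟩ := isCompact_Icc.exists_isMaxOn (Set.nonempty_Icc.2 hτ.le)
    (continuous_abs.comp hy1cont).continuousOn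
  set C := |y Cm 1| with hC
  have hCm : ∀ r ∈ Set.Icc (0:ℝ) τ, |y r 1| ≤ C := fun r hr => hCm' hr
  -- integrand identity
  have hI : (fun r => (fun x : Fin 2 → ℝ => ![x 1, 0]) (y r)
        + ∑ i : Fin 1, u r i • (fun (_ : Fin 1) (x : Fin 2 → ℝ) => ![x 1, 1]) i (y r))
      = fun r => (![y r 1 * (1 + u₀ r), u₀ r] : Fin 2 → ℝ) := by
    funext r i
    rw [Fin.sum_univ_one]
    fin_cases i <;> simp [hu₀] <;> ring
  -- integrability
  have hgmeas : Measurable fun r => y r 1 * (1 + u₀ r) :=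
    hy1cont.measurable.mul (measurable_const.add hm)
  have hg_int : ∀ t ∈ Set.Icc (0:ℝ) τ,
      IntervalIntegrable (fun r => y r 1 * (1 + u₀ r)) volume 0 t := by
    intro t ht
    refine myIntegrableOn hgmeas (C := C * 2) fun r hr => ?_
    have hr' : r ∈ Set.Icc (0:ℝ) τ := by
      rw [Set.uIcc_of_le ht.1] at hr
      exact ⟨hr.1, hr.2.trans ht.2⟩
    have h1 : |y r 1| ≤ C := hCm r hr'
    have h2 : |1 + u₀ r| ≤ 2 := by
      have := hb r; rw [abs_le] at this ⊢; constructor <;> linarith [this.1, this.2]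
    calc |y r 1 * (1 + u₀ r)| = |y r 1| * |1 + u₀ r| := abs_mul _ _
      _ ≤ C * 2 := mul_le_mul h1 h2 (abs_nonneg _) ((abs_nonneg _).trans h1)
  have hu_int : ∀ a b : ℝ, IntervalIntegrable u₀ volume a b := fun a b =>
    myIntegrableOn hm (C := 1) fun r _ => hb r
  -- component equations
  have hcomp : ∀ t ∈ Set.Icc (0:ℝ) τ,
      y t 1 = (∫ r in (0:ℝ)..t, u₀ r) ∧
      y t 0 = ∫ r in (0:ℝ)..t, y r 1 * (1 + u₀ r) := by
    intro t ht
    have := hyint t ht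
    rw [hI, pairInt (hg_int t ht) (hu_int 0 t)] at this
    constructor
    · rw [this]; simp
    · rw [this]; simp
  set W : ℝ → ℝ := fun t => ∫ r in (0:ℝ)..t, u₀ r with hW
  set a : ℝ := W τ with ha
  have hWcont : Continuous W := intervalIntegral.continuous_primitive (fun a b => hu_int a b) 0
  have hWbd : ∀ t, 0 ≤ t → |W t| ≤ t := by
    intro t ht
    have : ‖∫ r in (0:ℝ)..t, u₀ r‖ ≤ 1 * |t - 0| :=
      intervalIntegral.norm_integral_le_of_norm_le_const fun r _ => by simpa using hb r
    rw [sub_zero, abs_of_nonneg ht] at this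
    simpa using this
  have hWub2 : ∀ t ∈ Set.Icc (0:ℝ) τ, W t ≤ a + (τ - t) := by
    intro t ht
    have hsub : a - W t = ∫ r in t..τ, u₀ r := by
      rw [ha, hW]
      exact (intervalIntegral.integral_interval_sub_left (hu_int 0 τ) (hu_int 0 t))
    have : ‖∫ r in t..τ, u₀ r‖ ≤ 1 * |τ - t| :=
      intervalIntegral.norm_integral_le_of_norm_le_const fun r _ => by simpa using hb r
    rw [abs_of_nonneg (by linarith [ht.2])] at this
    rw [← hsub] at this
    have := abs_le.1 (by simpa using this)
    linarith [this.1]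
  have haabs : |a| ≤ τ := hWbd τ hτ.le
  -- x₁ in terms of W
  have hx1 : y τ 0 = (∫ t in (0:ℝ)..τ, W t) + a ^ 2 / 2 := by
    have h0 := (hcomp τ ⟨le_refl 0 |>.trans hτ.le, le_refl τ⟩).2
    have hcg : ∫ r in (0:ℝ)..τ, y r 1 * (1 + u₀ r) = ∫ r in (0:ℝ)..τ, W r * (1 + u₀ r) := by
      refine intervalIntegral.integral_congr fun r hr => ?_
      rw [Set.uIcc_of_le hτ.le] at hr
      rw [(hcomp r hr).1]
    have hWu_int : IntervalIntegrable (fun r => W r * u₀ r) volume 0 τ := by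
      refine myIntegrableOn (hWcont.measurable.mul hm) (C := τ) fun r hr => ?_
      rw [Set.uIcc_of_le hτ.le] at hr
      calc |W r * u₀ r| = |W r| * |u₀ r| := abs_mul _ _
        _ ≤ τ * 1 := mul_le_mul ((hWbd r hr.1).trans hr.2) (hb r) (abs_nonneg _)
            (le_trans (abs_nonneg _) ((hWbd r hr.1).trans hr.2))
        _ = τ := mul_one τ
    have hsplit : ∫ r in (0:ℝ)..τ, W r * (1 + u₀ r)
        = (∫ r in (0:ℝ)..τ, W r) + ∫ r in (0:ℝ)..τ, W r * u₀ r := by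
      have e : ∀ r, W r * (1 + u₀ r) = W r + W r * u₀ r := fun r => by ring
      simp_rw [e]
      exact intervalIntegral.integral_add (hWcont.intervalIntegrable 0 τ) hWu_int
    have hconv : ∫ r in (0:ℝ)..τ, W r * u₀ r = a ^ 2 / 2 := selfconv hm hb hτ.le
    rw [h0, hcg, hsplit, hconv]
  -- bound on ∫ W
  set c : ℝ := (a + τ) / 2 with hc
  have hc0 : 0 ≤ c := by
    have := abs_le.1 haabs; rw [hc]; linarith [this.1]
  have hcτ : c ≤ τ := by
    have := abs_le.1 haabs; rw [hc]; linarith [this.2]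
  have hWint : ∫ t in (0:ℝ)..τ, W t ≤ (τ ^ 2 + 2 * a * τ - a ^ 2) / 4 := by
    have hsplit : ∫ t in (0:ℝ)..τ, W t
        = (∫ t in (0:ℝ)..c, W t) + ∫ t in c..τ, W t :=
      (intervalIntegral.integral_add_adjacent_intervals
        (hWcont.intervalIntegrable 0 c) (hWcont.intervalIntegrable c τ)).symm
    have h1 : ∫ t in (0:ℝ)..c, W t ≤ ∫ t in (0:ℝ)..c, t := by
      refine intervalIntegral.integral_mono_on hc0 (hWcont.intervalIntegrable 0 c)
        ((continuous_id'.intervalIntegrable _ _)) fun t ht => ?_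
      exact (abs_le.1 (hWbd t ht.1)).2
    have h2 : ∫ t in c..τ, W t ≤ ∫ t in c..τ, (a + τ - t) := by
      refine intervalIntegral.integral_mono_on hcτ (hWcont.intervalIntegrable c τ)
        ((intervalIntegrable_const).sub (continuous_id'.intervalIntegrable _ _)) fun t ht => ?_
      linarith [hWub2 t ⟨hc0.trans ht.1, ht.2⟩]
    have e1 : ∫ t in (0:ℝ)..c, t = c ^ 2 / 2 := by
      rw [integral_id]; ring
    have e2 : ∫ t in c..τ, (a + τ - t) = (a + τ) * (τ - c) - (τ ^ 2 - c ^ 2) / 2 := by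
      have : ∀ t : ℝ, a + τ - t = (a + τ) - t := fun t => rfl
      rw [intervalIntegral.integral_sub intervalIntegrable_const (continuous_id'.intervalIntegrable _ _),
        intervalIntegral.integral_const, integral_id]
      simp [smul_eq_mul]; ring
    rw [hsplit]
    have := add_le_add h1 h2
    rw [e1, e2] at this
    refine this.trans (le_of_eq ?_)
    rw [hc]; ring
  -- conclude
  have hfin : 2 * y τ 0 - τ * y τ 1 ≤ τ ^ 2 / 2 + (y τ 1) ^ 2 / 2 := by
    have hy1τ : y τ 1 = a := by
      rw [ha, hW]; exact (hcomp τ ⟨hτ.le, le_refl τ⟩).1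
    rw [hx1, hy1τ]
    nlinarith [hWint]
  rw [hpy]
  exact hfin

theorem trajLemma {τ : ℝ} (hτ : 0 < τ) {s : ℝ} (hs : s ∈ Set.Ioo (0:ℝ) 1) :
    ∃ y, IsNLTraj (fun x : Fin 2 → ℝ => ![x 1, 0])
        (fun (_ : Fin 1) (x : Fin 2 → ℝ) => ![x 1, 1]) τ
        (fun t (_ : Fin 1) => if t < s * τ then (1:ℝ) else -1) 0 y ∧
      y τ = ![s ^ 2 * τ ^ 2, τ * (2 * s - 1)] := by
  set σ : ℝ := s * τ with hσdef
  have hσ0 : 0 < σ := mul_pos hs.1 hτ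
  have hστ : σ < τ := by
    have := mul_lt_mul_of_pos_right hs.2 hτ
    simpa [hσdef] using this
  set g : ℝ → ℝ := fun r => if r < σ then 2 * r else 0 with hg
  set h : ℝ → ℝ := fun r => if r < σ then 1 else -1 with hh
  set y : ℝ → Fin 2 → ℝ :=
    fun t => ![if t ≤ σ then t ^ 2 else σ ^ 2, if t ≤ σ then t else 2 * σ - t] with hy
  have hgm : Measurable g :=
    Measurable.ite measurableSet_Iio (measurable_const.mul measurable_id) measurable_const
  have hhm : Measurable h :=
    Measurable.ite measurableSet_Iio measurable_const measurable_const
  have hgint : ∀ a b : ℝ, IntervalIntegrable g volume a b := by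
    intro a b
    refine myIntegrableOn hgm (C := 2 * (|a| + |b| + |σ|)) fun r hr => ?_
    simp only [hg]
    have h1 : |r| ≤ |a| + |b| := by
      rcases Set.mem_uIcc.1 hr with ⟨h1, h2⟩ | ⟨h1, h2⟩ <;>
        · rw [abs_le]; constructor <;>
            [linarith [neg_abs_le a, neg_abs_le b, le_abs_self a, le_abs_self b];
             linarith [neg_abs_le a, neg_abs_le b, le_abs_self a, le_abs_self b]]
    split
    · rw [abs_mul]
      calc |(2:ℝ)| * |r| = 2 * |r| := by rw [abs_two]
        _ ≤ 2 * (|a| + |b| + |σ|) := by nlinarith [abs_nonneg σ]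
    · simp
      nlinarith [abs_nonneg a, abs_nonneg b, abs_nonneg σ]
  have hhint : ∀ a b : ℝ, IntervalIntegrable h volume a b := by
    intro a b
    refine myIntegrableOn hhm (C := 1) fun r _ => ?_
    simp only [hh]; split <;> simp
  -- integral of h on [0,t]
  have hInth : ∀ t : ℝ, 0 ≤ t → (∫ r in (0:ℝ)..t, h r) = if t ≤ σ then t else 2 * σ - t := by
    intro t ht
    by_cases htσ : t ≤ σ
    · rw [if_pos htσ]
      have hae : ∀ᵐ r ∂volume, r ∈ Set.uIoc 0 t → h r = 1 := by
        have hsub : {r : ℝ | ¬(r ∈ Set.uIoc 0 t → h r = 1)} ⊆ {σ} := by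
          intro r hr
          simp only [Set.mem_setOf_eq, Classical.not_imp] at hr
          obtain ⟨hr1, hr2⟩ := hr
          rw [Set.uIoc_of_le ht] at hr1
          simp only [hh] at hr2
          by_cases hrσ : r < σ
          · exact absurd (if_pos hrσ) hr2
          · have : r = σ := le_antisymm (hr1.2.trans htσ) (not_lt.1 hrσ)
            exact this ▸ rfl
        exact measure_mono_null hsub (measure_singleton σ)
      rw [intervalIntegral.integral_congr_ae hae]
      simp
    · rw [if_neg htσ]
      push_neg at htσ
      have hsplit : (∫ r in (0:ℝ)..t, h r)
          = (∫ r in (0:ℝ)..σ, h r) + ∫ r in σ..t, h r :=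
        (intervalIntegral.integral_add_adjacent_intervals (hhint 0 σ) (hhint σ t)).symm
      have h1 : (∫ r in (0:ℝ)..σ, h r) = σ := by
        have hae : ∀ᵐ r ∂volume, r ∈ Set.uIoc 0 σ → h r = 1 := by
          have hsub : {r : ℝ | ¬(r ∈ Set.uIoc 0 σ → h r = 1)} ⊆ {σ} := by
            intro r hr
            simp only [Set.mem_setOf_eq, Classical.not_imp] at hr
            obtain ⟨hr1, hr2⟩ := hr
            rw [Set.uIoc_of_le hσ0.le] at hr1
            simp only [hh] at hr2
            by_cases hrσ : r < σ
            · exact absurd (if_pos hrσ) hr2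
            · exact (le_antisymm hr1.2 (not_lt.1 hrσ)) ▸ rfl
          exact measure_mono_null hsub (measure_singleton σ)
        rw [intervalIntegral.integral_congr_ae hae]
        simp
      have h2 : (∫ r in σ..t, h r) = -(t - σ) := by
        have : Set.EqOn h (fun _ => (-1:ℝ)) (Set.uIcc σ t) := by
          intro r hr
          rw [Set.uIcc_of_le htσ.le] at hr
          show (if r < σ then (1:ℝ) else -1) = -1
          rw [if_neg (not_lt.2 hr.1)]
        rw [intervalIntegral.integral_congr this]
        simp
      rw [hsplit, h1, h2]; ring
  -- integral of g on [0,t]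
  have hIntg : ∀ t : ℝ, 0 ≤ t → (∫ r in (0:ℝ)..t, g r) = if t ≤ σ then t ^ 2 else σ ^ 2 := by
    intro t ht
    by_cases htσ : t ≤ σ
    · rw [if_pos htσ]
      have hae : ∀ᵐ r ∂volume, r ∈ Set.uIoc 0 t → g r = 2 * r := by
        have hsub : {r : ℝ | ¬(r ∈ Set.uIoc 0 t → g r = 2 * r)} ⊆ {σ} := by
          intro r hr
          simp only [Set.mem_setOf_eq, Classical.not_imp] at hr
          obtain ⟨hr1, hr2⟩ := hr
          rw [Set.uIoc_of_le ht] at hr1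
          simp only [hg] at hr2
          by_cases hrσ : r < σ
          · exact absurd (if_pos hrσ) hr2
          · have : r = σ := le_antisymm (hr1.2.trans htσ) (not_lt.1 hrσ)
            exact this ▸ rfl
        exact measure_mono_null hsub (measure_singleton σ)
      rw [intervalIntegral.integral_congr_ae hae]
      rw [intervalIntegral.integral_const_mul, integral_id]
      ring
    · rw [if_neg htσ]
      push_neg at htσ
      have hsplit : (∫ r in (0:ℝ)..t, g r)
          = (∫ r in (0:ℝ)..σ, g r) + ∫ r in σ..t, g r :=
        (intervalIntegral.integral_add_adjacent_intervals (hgint 0 σ) (hgint σ t)).symm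
      have h1 : (∫ r in (0:ℝ)..σ, g r) = σ ^ 2 := by
        have hae : ∀ᵐ r ∂volume, r ∈ Set.uIoc 0 σ → g r = 2 * r := by
          have hsub : {r : ℝ | ¬(r ∈ Set.uIoc 0 σ → g r = 2 * r)} ⊆ {σ} := by
            intro r hr
            simp only [Set.mem_setOf_eq, Classical.not_imp] at hr
            obtain ⟨hr1, hr2⟩ := hr
            rw [Set.uIoc_of_le hσ0.le] at hr1
            simp only [hg] at hr2
            by_cases hrσ : r < σ
            · exact absurd (if_pos hrσ) hr2
            · exact (le_antisymm hr1.2 (not_lt.1 hrσ)) ▸ rfl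
          exact measure_mono_null hsub (measure_singleton σ)
        rw [intervalIntegral.integral_congr_ae hae]
        rw [intervalIntegral.integral_const_mul, integral_id]
        ring
      have h2 : (∫ r in σ..t, g r) = 0 := by
        have : Set.EqOn g (fun _ => (0:ℝ)) (Set.uIcc σ t) := by
          intro r hr
          rw [Set.uIcc_of_le htσ.le] at hr
          show (if r < σ then 2 * r else (0:ℝ)) = 0
          rw [if_neg (not_lt.2 hr.1)]
        rw [intervalIntegral.integral_congr this]
        simp
      rw [hsplit, h1, h2]; ring
  refine ⟨y, ⟨?_, ?_, ?_⟩, ?_⟩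
  · -- continuity
    refine continuous_pi fun i => ?_
    fin_cases i
    · show Continuous fun t => if t ≤ σ then t ^ 2 else σ ^ 2
      exact Continuous.if_le (continuous_pow 2) continuous_const continuous_id
        continuous_const (fun x hx => by rw [hx])
    · show Continuous fun t => if t ≤ σ then t else 2 * σ - t
      exact Continuous.if_le continuous_id (continuous_const.sub continuous_id) continuous_id
        continuous_const (fun x hx => by rw [hx]; ring)
  · -- initial condition
    funext i
    fin_cases i <;> simp [hy, hσ0.le]
  · -- integral equation
    intro t ht
    have hInt : (fun r => (fun x : Fin 2 → ℝ => ![x 1, 0]) (y r)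
          + ∑ i : Fin 1, (if r < σ then (1:ℝ) else -1) • (fun (_ : Fin 1) (x : Fin 2 → ℝ) => ![x 1, 1]) i (y r))
        = fun r => (![g r, h r] : Fin 2 → ℝ) := by
      funext r i
      rw [Fin.sum_univ_one]
      have hyr1 : y r 1 = if r ≤ σ then r else 2 * σ - r := by rw [hy]; simp
      fin_cases i
      · show y r 1 + (if r < σ then (1:ℝ) else -1) * y r 1 = g r
        simp only [hyr1, hg]
        by_cases hrσ : r < σ
        · rw [if_pos hrσ, if_pos hrσ.le, if_pos hrσ]; ring
        · rw [if_neg hrσ, if_neg hrσ]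
          by_cases hrσ' : r ≤ σ
          · rw [if_pos hrσ']
            have : r = σ := le_antisymm hrσ' (not_lt.1 hrσ)
            rw [this]; ring
          · rw [if_neg hrσ']; ring
      · show (0:ℝ) + (if r < σ then (1:ℝ) else -1) * 1 = h r
        simp only [hh]; split <;> ring
    rw [hInt, pairInt (hgint 0 t) (hhint 0 t)]
    funext i
    fin_cases i
    · show y t 0 = (0 : Fin 2 → ℝ) 0 + _
      rw [hy]
      simp only [Matrix.cons_val_zero, Pi.zero_apply]
      rw [hIntg t ht.1]
      simp
    · show y t 1 = (0 : Fin 2 → ℝ) 1 + _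
      rw [hy]
      simp only [Matrix.cons_val_one, Matrix.head_cons, Pi.zero_apply]
      rw [hInth t ht.1]
      simp
  · -- terminal value
    funext i
    fin_cases i <;>
      simp [hy, not_le.2 hστ, hσdef, not_le.2 (show s * τ < τ from hστ)] <;> ring

/-- the system `ẋ₁ = x₂(1+u)`, `ẋ₂ = u`, `u ∈ [-1,1]`: the curve
`γ(s) = (s²τ², τ(2s-1))` lies in `𝓡^τ`, `γ(1/2)` is a boundary point, and
the outer normal `ζ = (2,-τ)/√(4+τ²)` at `γ(1/2)` satisfies
`⟨ζ, γ(s) - γ(1/2)⟩ = 2τ²(s-1/2)²/√(4+τ²) > 0` for `s ≠ 1/2`; hence `𝓡^τ` is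
not convex, for any `τ > 0`. -/
theorem example_reachable_set_not_convex
    (F : (Fin 2 → ℝ) → Fin 2 → ℝ) (hF : F = fun x => ![x 1, 0])
    (G : Fin 1 → (Fin 2 → ℝ) → Fin 2 → ℝ) (hG : G = fun _ x => ![x 1, 1])
    (τ : ℝ) (hτ : 0 < τ)
    (γ : ℝ → Fin 2 → ℝ) (hγ : γ = fun s => ![s ^ 2 * τ ^ 2, τ * (2 * s - 1)])
    (ζ : Fin 2 → ℝ)
    (hζ : ζ = ![2 / Real.sqrt (4 + τ ^ 2), -τ / Real.sqrt (4 + τ ^ 2)]) :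
    (∀ s ∈ Set.Ioo (0 : ℝ) 1,
      (∃ y, IsNLTraj F G τ (fun t _ => if t < s * τ then 1 else -1) 0 y ∧ y τ = γ s) ∧
      γ s ∈ nlReach F G τ) ∧
    γ (1 / 2) ∈ frontier (nlReach F G τ) ∧
    (∀ s ∈ Set.Ioo (0 : ℝ) 1,
      euDot ζ (γ s - γ (1 / 2)) = 2 * τ ^ 2 * (s - 1 / 2) ^ 2 / Real.sqrt (4 + τ ^ 2) ∧
      (s ≠ 1 / 2 → 0 < euDot ζ (γ s - γ (1 / 2)))) ∧
    ¬ Convex ℝ (nlReach F G τ) := by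

  subst hF hG hγ hζ
  set R : ℝ := Real.sqrt (4 + τ ^ 2) with hRdef
  have hR0 : 0 < R := Real.sqrt_pos.2 (by positivity)
  have hR2 : R ^ 2 = 4 + τ ^ 2 := Real.sq_sqrt (by positivity)
  have hRge2 : 2 ≤ R := by nlinarith [hR0, hR2]
  have hτR : τ ≤ R := by nlinarith [hR0, hR2, hτ]
  -- Part 1
  have part1 : ∀ s ∈ Set.Ioo (0 : ℝ) 1,
      (∃ y, IsNLTraj (fun x : Fin 2 → ℝ => ![x 1, 0])
          (fun (_ : Fin 1) (x : Fin 2 → ℝ) => ![x 1, 1]) τ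
          (fun t (_ : Fin 1) => if t < s * τ then (1:ℝ) else -1) 0 y ∧
        y τ = ![s ^ 2 * τ ^ 2, τ * (2 * s - 1)]) ∧
      (![s ^ 2 * τ ^ 2, τ * (2 * s - 1)] : Fin 2 → ℝ) ∈
        nlReach (fun x : Fin 2 → ℝ => ![x 1, 0])
          (fun (_ : Fin 1) (x : Fin 2 → ℝ) => ![x 1, 1]) τ := by
    intro s hs
    obtain ⟨y, hy, hyτ⟩ := trajLemma hτ hs
    refine ⟨⟨y, hy, hyτ⟩, ?_⟩
    refine ⟨fun t (_ : Fin 1) => if t < s * τ then (1:ℝ) else -1, y, ⟨?_, ?_⟩, hy, hyτ.symm⟩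
    · exact measurable_pi_lambda _ fun i =>
        Measurable.ite measurableSet_Iio measurable_const measurable_const
    · intro t i; dsimp only; split <;> norm_num
  have mem12 : (![(1/2:ℝ) ^ 2 * τ ^ 2, τ * (2 * (1/2) - 1)] : Fin 2 → ℝ) ∈
      nlReach (fun x : Fin 2 → ℝ => ![x 1, 0])
        (fun (_ : Fin 1) (x : Fin 2 → ℝ) => ![x 1, 1]) τ :=
    (part1 (1/2) ⟨by norm_num, by norm_num⟩).2
  refine ⟨fun s hs => (part1 s hs : _), ?_, ?_, ?_⟩
  · -- frontier
    rw [← closure_diff_interior]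
    refine ⟨subset_closure mem12, ?_⟩
    intro hin
    rw [mem_interior_iff_mem_nhds, Metric.mem_nhds_iff] at hin
    obtain ⟨ε, hε, hball⟩ := hin
    set δ : ℝ := min (ε / 2) 1 with hδdef
    have hδ0 : 0 < δ := lt_min (by linarith) one_pos
    have hδ1 : δ ≤ 1 := min_le_right _ _
    have hδε : δ < ε := lt_of_le_of_lt (min_le_left _ _) (by linarith)
    set p : Fin 2 → ℝ := (fun s : ℝ => ![s ^ 2 * τ ^ 2, τ * (2 * s - 1)]) (1/2) with hpdef
    set ζ : Fin 2 → ℝ := ![2 / R, -τ / R] with hζdef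
    set q : Fin 2 → ℝ := p + δ • ζ with hqdef
    have hζnorm : ∀ i, |ζ i| ≤ 1 := by
      intro i
      fin_cases i <;> simp [hζdef] <;> rw [abs_div, abs_of_pos hR0, div_le_one hR0]
      · rw [abs_two]; exact hRge2
      · rw [abs_neg, abs_of_pos hτ]; exact hτR
    have hqmem : q ∈ Metric.ball p ε := by
      rw [Metric.mem_ball, dist_eq_norm]
      have : q - p = δ • ζ := by rw [hqdef]; abel
      rw [this]
      have h1 : ‖δ • ζ‖ ≤ δ := by
        refine (norm_smul_le δ ζ).trans ?_
        rw [Real.norm_eq_abs, abs_of_pos hδ0]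
        have h2 : ‖ζ‖ ≤ 1 := by
          refine (pi_norm_le_iff_of_nonneg zero_le_one).2 fun i => ?_
          rw [Real.norm_eq_abs]; exact hζnorm i
        nlinarith [norm_nonneg ζ]
      linarith
    have hqreach := hball hqmem
    have hkey := keyIneq hτ hqreach
    set ρ : ℝ := R⁻¹ with hρdef
    have hρ0 : 0 < ρ := inv_pos.2 hR0
    have hRρ : R * ρ = 1 := mul_inv_cancel₀ hR0.ne'
    have hq0 : q 0 = τ ^ 2 / 4 + δ * (2 * ρ) := by
      rw [hqdef]
      simp only [Pi.add_apply, Pi.smul_apply, smul_eq_mul, hpdef, hζdef]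
      norm_num [div_eq_mul_inv]
      try ring
    have hq1 : q 1 = δ * (-(τ * ρ)) := by
      rw [hqdef]
      simp only [Pi.add_apply, Pi.smul_apply, smul_eq_mul, hpdef, hζdef]
      norm_num [div_eq_mul_inv]
      try ring
      exact Or.inl (Or.inl rfl)
    rw [hq0, hq1] at hkey
    have hτρ : τ * ρ ≤ 1 := by
      calc τ * ρ ≤ R * ρ := by nlinarith [hρ0]
        _ = 1 := hRρ
    have e1 : 4 * (δ * ρ) + τ ^ 2 * (δ * ρ) = R * δ := by
      have : (4 + τ ^ 2) * (δ * ρ) = R * δ := by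
        rw [← hR2]
        calc R ^ 2 * (δ * ρ) = (R * ρ) * (R * δ) := by ring
          _ = R * δ := by rw [hRρ]; ring
      linarith [this]
    nlinarith [hkey, e1, hτρ, hδ0, hδ1, hRge2, hρ0,
      mul_nonneg (mul_nonneg hδ0.le hτ.le) hρ0.le,
      mul_nonneg (sub_nonneg.2 hτρ) (mul_nonneg hδ0.le hδ0.le)]
  · -- dot product
    intro s hs
    have hdot : euDot (![2 / R, -τ / R] : Fin 2 → ℝ)
        ((fun s : ℝ => ![s ^ 2 * τ ^ 2, τ * (2 * s - 1)]) s
          - (fun s : ℝ => ![s ^ 2 * τ ^ 2, τ * (2 * s - 1)]) (1/2))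
        = 2 * τ ^ 2 * (s - 1 / 2) ^ 2 / R := by
      rw [euDot, Fin.sum_univ_two]
      simp only [Pi.sub_apply, Matrix.cons_val_zero, Matrix.cons_val_one, Matrix.head_cons]
      field_simp
      ring
    refine ⟨hdot, fun hne => ?_⟩
    rw [hdot]
    have h1 : (0:ℝ) < (s - 1/2) ^ 2 := by
      have : s - 1/2 ≠ 0 := sub_ne_zero.2 hne
      positivity
    positivity
  · -- not convex
    intro hconv
    have hp1 := (part1 (1/4) ⟨by norm_num, by norm_num⟩).2
    have hp2 := (part1 (3/4) ⟨by norm_num, by norm_num⟩).2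
    have hm := hconv hp1 hp2 (by norm_num : (0:ℝ) ≤ 1/2) (by norm_num : (0:ℝ) ≤ 1/2)
      (by norm_num)
    have hkey := keyIneq hτ hm
    have h0 : ((1/2:ℝ) • (![(1/4:ℝ) ^ 2 * τ ^ 2, τ * (2 * (1/4) - 1)] : Fin 2 → ℝ)
        + (1/2:ℝ) • ![(3/4:ℝ) ^ 2 * τ ^ 2, τ * (2 * (3/4) - 1)]) 0 = 5 * τ ^ 2 / 16 := by
      simp only [Pi.add_apply, Pi.smul_apply, smul_eq_mul, Matrix.cons_val_zero]
      ring
    have h1 : ((1/2:ℝ) • (![(1/4:ℝ) ^ 2 * τ ^ 2, τ * (2 * (1/4) - 1)] : Fin 2 → ℝ)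
        + (1/2:ℝ) • ![(3/4:ℝ) ^ 2 * τ ^ 2, τ * (2 * (3/4) - 1)]) 1 = 0 := by
      simp only [Pi.add_apply, Pi.smul_apply, smul_eq_mul, Matrix.cons_val_one,
        Matrix.head_cons, Matrix.cons_val_zero]
      ring
    rw [h0, h1] at hkey
    nlinarith [hkey, hτ]
end
end

section
/- Let N ≥ 2, 1 ≤ M ≤ N, and let F : ℝ^N → ℝ^N and G : ℝ^N → ℝ^{N×M} be Lipschitz. For τ > 0 let 𝓡_τ = {z ∈ ℝ^N : T(z) ≤ τ} be the sublevel set of the minimum time function for the system ẏ = F(y) + G(y)u, u ∈ [−1,1]^M. Suppose x ∈ bdry 𝓡_τ and there exists an admissible control steering x to the origin exactly in time τ, and let ζ be a Fréchet normal to 𝓡_τ at x. Then the minimized Hamiltonian satisfies h(x, ζ) = ⟨ζ, F(x)⟩ + min_{u ∈ [−1,1]^M} ⟨ζ, G(x)u⟩ ≤ 0. -/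
noncomputable section
open MeasureTheory

/-- The set of times in which `x` can be steered to the origin. -/
def steerTimes {N M : ℕ} (F : (Fin N → ℝ) → Fin N → ℝ)
    (G : Fin M → (Fin N → ℝ) → Fin N → ℝ) (x : Fin N → ℝ) : Set ℝ :=
  {t | 0 ≤ t ∧ ∃ u y, IsAdmissible M u ∧ IsNLTraj F G t u x y ∧ y t = 0}

/-- The minimum time function `T`. -/
def minTime {N M : ℕ} (F : (Fin N → ℝ) → Fin N → ℝ)
    (G : Fin M → (Fin N → ℝ) → Fin N → ℝ) (x : Fin N → ℝ) : ℝ :=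
  sInf (steerTimes F G x)

/-- The sublevel set `𝓡_τ = {z : T(z) ≤ τ}` of the minimum time function. -/
def minTimeSublevel {N M : ℕ} (F : (Fin N → ℝ) → Fin N → ℝ)
    (G : Fin M → (Fin N → ℝ) → Fin N → ℝ) (τ : ℝ) : Set (Fin N → ℝ) :=
  {z | (steerTimes F G z).Nonempty ∧ minTime F G z ≤ τ}

/-- The Fréchet normal cone to `K` at `x`:
`limsup_{K ∋ y → x} ⟨v, (y-x)/‖y-x‖⟩ ≤ 0`. -/
def frechetNormal {N : ℕ} (K : Set (Fin N → ℝ)) (x : Fin N → ℝ) : Set (Fin N → ℝ) :=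
  {v | ∀ ε : ℝ, 0 < ε → ∃ δ : ℝ, 0 < δ ∧ ∀ y ∈ K, euNorm (y - x) < δ →
    euDot v (y - x) ≤ ε * euNorm (y - x)}



def euDotLM {N : ℕ} (ζ : Fin N → ℝ) : (Fin N → ℝ) →ₗ[ℝ] ℝ where
  toFun := euDot ζ
  map_add' v w := by simp [euDot, mul_add, Finset.sum_add_distrib]
  map_smul' c v := by
    simp only [euDot, RingHom.id_apply, smul_eq_mul, Pi.smul_apply, Finset.mul_sum]
    exact Finset.sum_congr rfl fun j _ => by ring

@[simp] lemma euDotLM_apply {N : ℕ} (ζ v : Fin N → ℝ) : euDotLM ζ v = euDot ζ v := rfl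

def euDotL {N : ℕ} (ζ : Fin N → ℝ) : (Fin N → ℝ) →L[ℝ] ℝ :=
  LinearMap.toContinuousLinearMap (euDotLM ζ)

@[simp] lemma euDotL_apply {N : ℕ} (ζ v : Fin N → ℝ) : euDotL ζ v = euDot ζ v := rfl

lemma euDot_sum_smul {N M : ℕ} (ζ : Fin N → ℝ) (a : Fin M → ℝ) (w : Fin M → Fin N → ℝ) :
    euDot ζ (∑ i, a i • w i) = ∑ i, a i * euDot ζ (w i) := by
  have h := map_sum (euDotLM ζ) (fun i => a i • w i) Finset.univ
  simp only [LinearMap.map_smul, euDotLM_apply, smul_eq_mul] at h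
  exact h

lemma euDot_add_sum {N M : ℕ} (ζ v : Fin N → ℝ) (a : Fin M → ℝ) (w : Fin M → Fin N → ℝ) :
    euDot ζ (v + ∑ i, a i • w i) = euDot ζ v + ∑ i, a i * euDot ζ (w i) := by
  have h := map_add (euDotLM ζ) v (∑ i, a i • w i)
  simpa [euDot_sum_smul] using h

lemma euNorm_le_sqrt_mul {N : ℕ} (v : Fin N → ℝ) : euNorm v ≤ Real.sqrt N * ‖v‖ := by
  rw [euNorm, ← Real.sqrt_sq (norm_nonneg v), ← Real.sqrt_mul (by positivity)]
  apply Real.sqrt_le_sqrt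
  calc (∑ i, v i ^ 2) ≤ ∑ _i : Fin N, ‖v‖ ^ 2 := by
        refine Finset.sum_le_sum fun i _ => ?_
        have h2 : |v i| ≤ ‖v‖ := by simpa [Real.norm_eq_abs] using norm_le_pi_norm v i
        calc v i ^ 2 = |v i| ^ 2 := (sq_abs _).symm
          _ ≤ ‖v‖ ^ 2 := by gcongr
    _ = (N : ℝ) * ‖v‖ ^ 2 := by simp [Finset.sum_const, nsmul_eq_mul]

lemma continuous_euDot_comp {N : ℕ} {α : Type*} [TopologicalSpace α] (ζ : Fin N → ℝ)
    {g : α → Fin N → ℝ} (hg : Continuous g) : Continuous fun r => euDot ζ (g r) := by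
  unfold euDot
  exact continuous_finset_sum _ fun j _ => continuous_const.mul ((continuous_apply j).comp hg)

/-- Along an admissible trajectory reaching the origin at time `τ`, every point
is in the sublevel set `𝓡_τ`. -/
lemma traj_mem_sublevel {N M : ℕ} (F : (Fin N → ℝ) → Fin N → ℝ)
    (G : Fin M → (Fin N → ℝ) → Fin N → ℝ) (τ : ℝ)
    (x : Fin N → ℝ) (u : ℝ → Fin M → ℝ) (y : ℝ → Fin N → ℝ)
    (hu : IsAdmissible M u) (hy : IsNLTraj F G τ u x y) (hyτ : y τ = 0)
    (hfint : ∀ a b, a ∈ Set.Icc (0:ℝ) τ → b ∈ Set.Icc (0:ℝ) τ →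
      IntervalIntegrable (fun r => F (y r) + ∑ i, u r i • G i (y r)) volume a b)
    {s : ℝ} (hs : s ∈ Set.Icc (0:ℝ) τ) : y s ∈ minTimeSublevel F G τ := by
  obtain ⟨hyc, hy0, hyint⟩ := hy
  set f : ℝ → Fin N → ℝ := fun r => F (y r) + ∑ i, u r i • G i (y r) with hfdef
  have hτs : τ - s ∈ steerTimes F G (y s) := by
    refine ⟨by linarith [hs.2], fun t => u (t + s), fun t => y (t + s),
      ⟨hu.1.comp (measurable_add_const s), fun t i => hu.2 (t + s) i⟩,
      ⟨hyc.comp (continuous_add_right s), by simp, ?_⟩, by simp [hyτ]⟩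
    intro t ht
    have hts : t + s ∈ Set.Icc (0:ℝ) τ := ⟨by linarith [ht.1, hs.1], by linarith [ht.2]⟩
    show y (t + s) = y s + ∫ r in (0:ℝ)..t, f (r + s)
    have e3 : (∫ r in (0:ℝ)..t, f (r + s)) = ∫ r in s..(t + s), f r := by
      rw [intervalIntegral.integral_comp_add_right f s, zero_add]
    have e4 : (∫ r in (0:ℝ)..s, f r) + ∫ r in s..(t + s), f r = ∫ r in (0:ℝ)..(t + s), f r :=
      intervalIntegral.integral_add_adjacent_intervals
        (hfint 0 s ⟨le_rfl, le_trans hs.1 hs.2⟩ hs)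
        (hfint s (t + s) hs hts)
    rw [hyint (t + s) hts, hyint s hs, e3, ← e4, add_assoc]
  refine ⟨⟨_, hτs⟩, ?_⟩
  have h1 : minTime F G (y s) ≤ τ - s := csInf_le ⟨0, fun t ht => ht.1⟩ hτs
  linarith [hs.1]


set_option maxHeartbeats 1000000 in
/-- at a boundary point `x` of the sublevel set `𝓡_τ` which can
be steered to the origin exactly in time `τ`, the minimized Hamiltonian
`h(x,ζ) = ⟨ζ, F(x)⟩ + min_{u ∈ [-1,1]^M} ⟨ζ, G(x)u⟩` is `≤ 0` for every
Fréchet normal `ζ`. -/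
theorem minimized_hamiltonian_nonpositive
    (N M : ℕ) (hN : 2 ≤ N) (hM1 : 1 ≤ M) (hMN : M ≤ N)
    (F : (Fin N → ℝ) → Fin N → ℝ) (G : Fin M → (Fin N → ℝ) → Fin N → ℝ)
    (hFLip : ∃ K : NNReal, LipschitzWith K F)
    (hGLip : ∀ i, ∃ K : NNReal, LipschitzWith K (G i))
    (τ : ℝ) (hτ : 0 < τ)
    (x : Fin N → ℝ) (hx : x ∈ frontier (minTimeSublevel F G τ))
    (hsteer : ∃ u y, IsAdmissible M u ∧ IsNLTraj F G τ u x y ∧ y τ = 0)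
    (ζ : Fin N → ℝ) (hζ : ζ ∈ frechetNormal (minTimeSublevel F G τ) x) :
    euDot ζ (F x) +
      sInf ((fun u : Fin M → ℝ => euDot ζ (∑ i, u i • G i x)) ''
        {u | ∀ i, u i ∈ Set.Icc (-1 : ℝ) 1}) ≤ 0 := by
  classical
  have hFc : Continuous F := hFLip.choose_spec.continuous
  have hGc : ∀ i, Continuous (G i) := fun i => (hGLip i).choose_spec.continuous
  set c : Fin M → ℝ := fun i => euDot ζ (G i x) with hc
  -- Step A : the infimum is at most `-∑ |c i|`
  have hSle : sInf ((fun u : Fin M → ℝ => euDot ζ (∑ i, u i • G i x)) ''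
      {u | ∀ i, u i ∈ Set.Icc (-1 : ℝ) 1}) ≤ -∑ i, |c i| := by
    apply csInf_le
    · refine ⟨-∑ i, |c i|, ?_⟩
      rintro _ ⟨a, ha, rfl⟩
      show -∑ i, |c i| ≤ euDot ζ (∑ i, a i • G i x)
      rw [euDot_sum_smul]
      rw [← Finset.sum_neg_distrib]
      refine Finset.sum_le_sum fun i _ => ?_
      have hai : |a i| ≤ 1 := abs_le.2 ⟨(ha i).1, (ha i).2⟩
      have : |a i * c i| ≤ |c i| := by
        rw [abs_mul]; nlinarith [abs_nonneg (c i)]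
      linarith [neg_abs_le (a i * c i), abs_nonneg (a i * c i)]
    · refine ⟨fun i => if 0 ≤ c i then -1 else 1, fun i => ?_, ?_⟩
      · by_cases h : 0 ≤ c i <;> simp [h]
      · show euDot ζ (∑ i, (if 0 ≤ c i then (-1:ℝ) else 1) • G i x) = -∑ i, |c i|
        rw [euDot_sum_smul, ← Finset.sum_neg_distrib]
        refine Finset.sum_congr rfl fun i _ => ?_
        by_cases h : 0 ≤ c i
        · simp [h, abs_of_nonneg h]; rfl
        · push_neg at h; simp [not_le.2 h, abs_of_neg h]; rfl
  have hsuff : euDot ζ (F x) - ∑ i, |c i| ≤ 0 → (euDot ζ (F x) +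
      sInf ((fun u : Fin M → ℝ => euDot ζ (∑ i, u i • G i x)) ''
        {u | ∀ i, u i ∈ Set.Icc (-1 : ℝ) 1}) ≤ 0) := fun h => by linarith
  apply hsuff
  set A := euDot ζ (F x) - ∑ i, |c i| with hA
  by_contra hApos
  push_neg at hApos
  -- the steering trajectory
  obtain ⟨u, y, hu, hy, hyτ⟩ := hsteer
  obtain ⟨hyc, hy0, hyint⟩ := hy
  set f : ℝ → Fin N → ℝ := fun r => F (y r) + ∑ i, u r i • G i (y r) with hfdef
  have hmf : Measurable f := by
    apply Measurable.add
    · exact (hFc.comp hyc).measurable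
    · exact Finset.measurable_sum _ fun i _ =>
        ((measurable_pi_apply i).comp hu.1).smul ((hGc i).comp hyc).measurable
  -- a bound for `f` on `[0, τ]`
  have hgc : Continuous fun r => ‖F (y r)‖ + ∑ i, ‖G i (y r)‖ := by
    apply Continuous.add
    · exact (hFc.comp hyc).norm
    · exact continuous_finset_sum _ fun i _ => ((hGc i).comp hyc).norm
  obtain ⟨r₀, hr₀mem, hr₀⟩ := isCompact_Icc.exists_isMaxOn (s := Set.Icc (0:ℝ) τ)
    ⟨0, ⟨le_rfl, hτ.le⟩⟩ hgc.continuousOn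
  set C : ℝ := ‖F (y r₀)‖ + ∑ i, ‖G i (y r₀)‖ with hCdef
  have hC0 : 0 ≤ C := by positivity
  have hfb : ∀ r ∈ Set.Icc (0:ℝ) τ, ‖f r‖ ≤ C := by
    intro r hr
    calc ‖f r‖ ≤ ‖F (y r)‖ + ‖∑ i, u r i • G i (y r)‖ := norm_add_le _ _
      _ ≤ ‖F (y r)‖ + ∑ i, ‖u r i • G i (y r)‖ := by
          gcongr; exact norm_sum_le _ _
      _ ≤ ‖F (y r)‖ + ∑ i, ‖G i (y r)‖ := by
          gcongr with i hi
          rw [norm_smul]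
          have h1 : ‖u r i‖ ≤ 1 := by
            rw [Real.norm_eq_abs]; exact abs_le.2 ⟨(hu.2 r i).1, (hu.2 r i).2⟩
          nlinarith [norm_nonneg (G i (y r))]
      _ ≤ C := hr₀ hr
  have hfint : ∀ a b, a ∈ Set.Icc (0:ℝ) τ → b ∈ Set.Icc (0:ℝ) τ →
      IntervalIntegrable f volume a b := by
    intro a b ha hb
    apply MeasureTheory.IntegrableOn.intervalIntegrable
    have hsub : Set.uIcc a b ⊆ Set.Icc 0 τ := Set.uIcc_subset_Icc ha hb
    refine MeasureTheory.Integrable.mono' (g := fun _ => C)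
      ?_ (hmf.aestronglyMeasurable.restrict) ?_
    · exact integrableOn_const isCompact_uIcc.measure_lt_top.ne
    · filter_upwards [ae_restrict_mem measurableSet_uIcc] with r hr
      exact hfb r (hsub hr)
  -- φ : the running Hamiltonian lower bound
  set φ : ℝ → ℝ := fun r => euDot ζ (F (y r)) - ∑ i, |euDot ζ (G i (y r))| with hφdef
  have hφc : Continuous φ := by
    apply Continuous.sub
    · exact continuous_euDot_comp ζ (hFc.comp hyc)
    · exact continuous_finset_sum _ fun i _ =>
        (continuous_euDot_comp ζ ((hGc i).comp hyc)).abs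
  have hφ0 : φ 0 = A := by simp [hφdef, hy0, hA, hc]
  obtain ⟨η, hη, hηs⟩ := Metric.continuousAt_iff.1 (hφc.continuousAt (x := 0)) (A/4) (by positivity)
  set ε := A / (4 * (Real.sqrt N * C + 1)) with hεdef
  have hBnn : 0 ≤ Real.sqrt N * C := mul_nonneg (Real.sqrt_nonneg _) hC0
  have hεpos : 0 < ε := by
    apply div_pos hApos; nlinarith
  simp only [frechetNormal, Set.mem_setOf_eq] at hζ
  obtain ⟨δ, hδ, hδs⟩ := hζ ε hεpos
  obtain ⟨s₀, hs₀, hs₀s⟩ := Metric.continuousAt_iff.1 hyc.continuousAt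
    (δ / (Real.sqrt N + 1)) (by positivity)
  set s := min τ (min (η/2) (s₀/2)) with hsdef
  have hs_pos : 0 < s := by
    apply lt_min hτ (lt_min (by linarith) (by linarith))
  have hsτ : s ≤ τ := min_le_left _ _
  have hsmem : s ∈ Set.Icc (0:ℝ) τ := ⟨hs_pos.le, hsτ⟩
  have hsη : s < η := lt_of_le_of_lt ((min_le_right _ _).trans (min_le_left _ _)) (by linarith)
  have hss₀ : s < s₀ := lt_of_le_of_lt ((min_le_right _ _).trans (min_le_right _ _)) (by linarith)
  -- y s is close to x
  have hyd : ‖y s - x‖ < δ / (Real.sqrt N + 1) := by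
    have := hs₀s (x := s) (by rw [Real.dist_eq, sub_zero, abs_of_pos hs_pos]; exact hss₀)
    rwa [hy0, dist_eq_norm] at this
  have hsqrtN : (0:ℝ) ≤ Real.sqrt N := Real.sqrt_nonneg _
  have hyse : euNorm (y s - x) < δ := by
    refine lt_of_le_of_lt (euNorm_le_sqrt_mul _) ?_
    calc Real.sqrt N * ‖y s - x‖ ≤ (Real.sqrt N + 1) * ‖y s - x‖ := by
          nlinarith [norm_nonneg (y s - x)]
      _ < (Real.sqrt N + 1) * (δ / (Real.sqrt N + 1)) := by
          apply mul_lt_mul_of_pos_left hyd (by positivity)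
      _ = δ := by field_simp
  have hmem : y s ∈ minTimeSublevel F G τ :=
    traj_mem_sublevel F G τ x u y hu ⟨hyc, hy0, hyint⟩ hyτ hfint hsmem
  have h0 : euDot ζ (y s - x) ≤ ε * euNorm (y s - x) := hδs (y s) hmem hyse
  -- chain of inequalities
  have i1 : s * (A - A/4) ≤ ∫ r in (0:ℝ)..s, φ r := by
    have hconst : (∫ _r in (0:ℝ)..s, (A - A/4)) = s * (A - A/4) := by
      rw [intervalIntegral.integral_const, sub_zero, smul_eq_mul]
    rw [← hconst]
    apply intervalIntegral.integral_mono_on hs_pos.le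
      intervalIntegrable_const (hφc.intervalIntegrable _ _)
    intro r hr
    have hrd : dist r 0 < η := by
      rw [Real.dist_eq, sub_zero, abs_of_nonneg hr.1]; linarith [hr.2]
    have := hηs hrd
    rw [Real.dist_eq, hφ0] at this
    have := abs_lt.1 this
    linarith [this.1]
  have hLint : IntervalIntegrable (fun r => euDot ζ (f r)) volume 0 s := by
    have h := hfint 0 s ⟨le_rfl, hτ.le⟩ hsmem
    rw [intervalIntegrable_iff] at h ⊢
    exact (euDotL ζ).integrable_comp h
  have i2 : (∫ r in (0:ℝ)..s, φ r) ≤ ∫ r in (0:ℝ)..s, euDot ζ (f r) := by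
    apply intervalIntegral.integral_mono_on hs_pos.le (hφc.intervalIntegrable _ _) hLint
    intro r _
    have he : euDot ζ (f r) = euDot ζ (F (y r)) + ∑ i, u r i * euDot ζ (G i (y r)) :=
      euDot_add_sum ζ (F (y r)) (fun i => u r i) (fun i => G i (y r))
    rw [he]
    have hterm : ∀ i ∈ Finset.univ, -|euDot ζ (G i (y r))| ≤ u r i * euDot ζ (G i (y r)) := by
      intro i _
      have hai : |u r i| ≤ 1 := abs_le.2 ⟨(hu.2 r i).1, (hu.2 r i).2⟩
      have : |u r i * euDot ζ (G i (y r))| ≤ |euDot ζ (G i (y r))| := by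
        rw [abs_mul]; nlinarith [abs_nonneg (euDot ζ (G i (y r)))]
      linarith [neg_abs_le (u r i * euDot ζ (G i (y r)))]
    have := Finset.sum_le_sum hterm
    rw [Finset.sum_neg_distrib] at this
    simp only [hφdef]
    linarith
  have i3 : (∫ r in (0:ℝ)..s, euDot ζ (f r)) = euDot ζ (y s - x) := by
    have h := (euDotL ζ).intervalIntegral_comp_comm (hfint 0 s ⟨le_rfl, hτ.le⟩ hsmem)
    have hys : y s - x = ∫ r in (0:ℝ)..s, f r := by
      rw [hyint s hsmem]; abel
    rw [hys]
    simpa using h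
  have i5 : euNorm (y s - x) ≤ Real.sqrt N * (C * s) := by
    refine le_trans (euNorm_le_sqrt_mul _) ?_
    have hys : y s - x = ∫ r in (0:ℝ)..s, f r := by
      rw [hyint s hsmem]; abel
    have hnb : ‖∫ r in (0:ℝ)..s, f r‖ ≤ C * |s - 0| := by
      apply intervalIntegral.norm_integral_le_of_norm_le_const
      intro r hr
      have hr' : r ∈ Set.Ioc (0:ℝ) s := by rwa [Set.uIoc_of_le hs_pos.le] at hr
      exact hfb r ⟨hr'.1.le, hr'.2.trans hsτ⟩
    rw [hys]
    have : ‖∫ r in (0:ℝ)..s, f r‖ ≤ C * s := by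
      rwa [sub_zero, abs_of_pos hs_pos] at hnb
    nlinarith
  have key : s * (A - A/4) ≤ ε * (Real.sqrt N * (C * s)) := by
    calc s * (A - A/4) ≤ ∫ r in (0:ℝ)..s, φ r := i1
      _ ≤ ∫ r in (0:ℝ)..s, euDot ζ (f r) := i2
      _ = euDot ζ (y s - x) := i3
      _ ≤ ε * euNorm (y s - x) := h0
      _ ≤ ε * (Real.sqrt N * (C * s)) := mul_le_mul_of_nonneg_left i5 hεpos.le
  have hfinal : ε * (Real.sqrt N * (C * s)) ≤ A/4 * s := by
    rw [hεdef]
    rw [div_mul_eq_mul_div, div_le_iff₀ (by nlinarith)]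
    nlinarith [mul_pos hApos hs_pos, mul_nonneg (mul_nonneg hApos.le hs_pos.le) hBnn]
  nlinarith [mul_pos hApos hs_pos]
end
end

section
/- Let a < b be real numbers, let K : (a,b) → [0,1] be measurable, and let k ∈ ℕ. Then ∫_a^b (t − a)^k K(t) dt ≥ (1/(k+1)) (∫_a^b K(t) dt)^{k+1}, and likewise ∫_a^b (b − t)^k K(t) dt ≥ (1/(k+1)) (∫_a^b K(t) dt)^{k+1}. -/
open MeasureTheory

lemma aux_integral_pow_mul_ge (a b : ℝ) (hab : a < b) (K : ℝ → ℝ) (hK : Measurable K)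
    (hK01 : ∀ t ∈ Set.Ioo a b, K t ∈ Set.Icc (0 : ℝ) 1) (k : ℕ) :
    (1 / (k + 1) : ℝ) * (∫ t in a..b, K t) ^ (k + 1) ≤ ∫ t in a..b, (t - a) ^ k * K t := by
  have hconv : ∀ f : ℝ → ℝ, (∫ t in a..b, f t) = ∫ t in Set.Ioo a b, f t := fun f => by
    rw [intervalIntegral.integral_of_le hab.le, MeasureTheory.integral_Ioc_eq_integral_Ioo]
  set s := Set.Ioo a b with hs
  have hsfin : volume s ≠ ⊤ := by simp [hs]
  have hbdd : ∀ (f : ℝ → ℝ) (C : ℝ), Measurable f → (∀ t ∈ s, |f t| ≤ C) →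
      IntegrableOn f s volume := by
    intro f C hf hb
    refine Measure.integrableOn_of_bounded (M := C) hsfin hf.aestronglyMeasurable ?_
    filter_upwards [ae_restrict_mem measurableSet_Ioo] with t ht
    simpa using hb t ht
  have hmul : ∀ x y C D : ℝ, |x| ≤ C → |y| ≤ D → |x * y| ≤ C * D := by
    intro x y C D hx hy
    rw [abs_mul]
    exact mul_le_mul hx hy (abs_nonneg _) ((abs_nonneg x).trans hx)
  have hKb : ∀ t ∈ s, |K t| ≤ 1 := fun t ht =>
    abs_le.2 ⟨by linarith [(hK01 t ht).1], (hK01 t ht).2⟩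
  have hta : ∀ t ∈ s, |(t - a) ^ k| ≤ (b - a) ^ k := by
    intro t ht
    rw [abs_pow]
    refine pow_le_pow_left₀ (abs_nonneg _) ?_ k
    rw [abs_of_nonneg (by linarith [ht.1] : (0:ℝ) ≤ t - a)]
    linarith [ht.2]
  have hKint : IntegrableOn K s volume := hbdd K 1 hK hKb
  set c := ∫ t in s, K t with hc
  have hc0 : 0 ≤ c := setIntegral_nonneg measurableSet_Ioo (fun t ht => (hK01 t ht).1)
  have hcb : c ≤ b - a := by
    have h1 : IntegrableOn (fun _ : ℝ => (1:ℝ)) s volume :=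
      integrableOn_const hsfin
    calc c ≤ ∫ _ in s, (1:ℝ) :=
          setIntegral_mono_on hKint h1 measurableSet_Ioo (fun t ht => (hK01 t ht).2)
      _ = b - a := by
          simp [hs, Real.volume_Ioo, ENNReal.toReal_ofReal (by linarith : (0:ℝ) ≤ b - a), hab.le]
  set s' := Set.Ioo a (a + c) with hs'
  have hsub : s' ⊆ s := Set.Ioo_subset_Ioo le_rfl (by linarith)
  set χ : ℝ → ℝ := s'.indicator 1 with hχ
  have hχmeas : Measurable χ := (measurable_const (a := (1:ℝ))).indicator measurableSet_Ioo
  have hχb : ∀ t, |χ t| ≤ 1 := fun t => by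
    by_cases h : t ∈ s' <;> simp [hχ, Set.indicator_of_mem, Set.indicator_of_notMem, h]
  have hKχ : ∀ t ∈ s, |K t - χ t| ≤ 2 := fun t ht =>
    (abs_sub _ _).trans (by linarith [hKb t ht, hχb t])
  -- ∫ χ over s = c
  have hχint : ∫ t in s, χ t = c := by
    rw [hχ, setIntegral_indicator measurableSet_Ioo,
      Set.inter_eq_self_of_subset_right hsub]
    simp [hs', Real.volume_Ioo, ENNReal.toReal_ofReal hc0, hc0]
  -- ∫ (t-a)^k χ over s = c^(k+1)/(k+1)
  have hχpow : ∫ t in s, (t - a) ^ k * χ t = c ^ (k + 1) / (k + 1) := by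
    have heq : ∀ t, (t - a) ^ k * χ t = s'.indicator (fun t => (t - a) ^ k) t := fun t => by
      by_cases h : t ∈ s' <;> simp [hχ, Set.indicator_of_mem, Set.indicator_of_notMem, h]
    rw [show (fun t => (t - a) ^ k * χ t) = s'.indicator (fun t => (t - a) ^ k) from funext heq]
    rw [setIntegral_indicator measurableSet_Ioo, Set.inter_eq_self_of_subset_right hsub]
    rw [← MeasureTheory.integral_Ioc_eq_integral_Ioo,
      ← intervalIntegral.integral_of_le (by linarith : a ≤ a + c)]
    have h := intervalIntegral.integral_comp_sub_right (a := a) (b := a + c)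
      (f := fun t : ℝ => t ^ k) a
    rw [h]
    simp [integral_pow]
  -- integrability
  have hint1 : IntegrableOn (fun t => c ^ k * (K t - χ t)) s volume := by
    refine hbdd _ (c ^ k * 2) (by fun_prop) (fun t ht => ?_)
    exact hmul _ _ _ _ (by rw [abs_of_nonneg (by positivity)]) (hKχ t ht)
  have hint2 : IntegrableOn (fun t => (t - a) ^ k * (K t - χ t)) s volume := by
    refine hbdd _ ((b - a) ^ k * 2) (by fun_prop) (fun t ht => ?_)
    exact hmul _ _ _ _ (hta t ht) (hKχ t ht)
  have hχintOn : IntegrableOn χ s volume := hbdd χ 1 hχmeas (fun t _ => hχb t)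
  have hpKint : IntegrableOn (fun t => (t - a) ^ k * K t) s volume := by
    refine hbdd _ ((b - a) ^ k * 1) (by fun_prop) (fun t ht => ?_)
    exact hmul _ _ _ _ (hta t ht) (hKb t ht)
  have hpχint : IntegrableOn (fun t => (t - a) ^ k * χ t) s volume := by
    refine hbdd _ ((b - a) ^ k * 1) (by fun_prop) (fun t ht => ?_)
    exact hmul _ _ _ _ (hta t ht) (hχb t)
  -- pointwise inequality
  have hpt : ∀ t ∈ s, c ^ k * (K t - χ t) ≤ (t - a) ^ k * (K t - χ t) := by
    intro t ht
    have h0 := (hK01 t ht).1; have h1 := (hK01 t ht).2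
    by_cases h : t ∈ s'
    · have hχ1 : χ t = 1 := Set.indicator_of_mem h 1
      rw [hχ1]
      have hle : (t - a) ^ k ≤ c ^ k :=
        pow_le_pow_left₀ (by linarith [ht.1]) (by linarith [h.2]) k
      exact mul_le_mul_of_nonpos_right hle (by linarith)
    · have hχ0 : χ t = 0 := Set.indicator_of_notMem h 1
      rw [hχ0, sub_zero]
      have hct : c ≤ t - a := by
        by_contra hcon
        exact h ⟨ht.1, by linarith⟩
      exact mul_le_mul_of_nonneg_right (pow_le_pow_left₀ hc0 hct k) h0
  have hmono := setIntegral_mono_on hint1 hint2 measurableSet_Ioo hpt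
  have hL : ∫ t in s, c ^ k * (K t - χ t) = 0 := by
    rw [integral_const_mul, integral_sub hKint hχintOn, hχint, ← hc, sub_self, mul_zero]
  have hR : ∫ t in s, (t - a) ^ k * (K t - χ t)
      = (∫ t in s, (t - a) ^ k * K t) - c ^ (k + 1) / (k + 1) := by
    have heq : (fun t => (t - a) ^ k * (K t - χ t))
        = fun t => (t - a) ^ k * K t - (t - a) ^ k * χ t := by
      funext t; ring
    rw [heq, integral_sub hpKint hpχint, hχpow]
  rw [hL, hR] at hmono
  rw [hconv K, hconv (fun t => (t - a) ^ k * K t), ← hc]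
  have hk : (0:ℝ) < (k:ℝ) + 1 := by positivity
  rw [one_div, inv_mul_eq_div]
  linarith

/-- for measurable `K : (a,b) → [0,1]` and `k ∈ ℕ`,
`∫_a^b (t-a)^k K(t) dt ≥ (1/(k+1)) (∫_a^b K(t) dt)^{k+1}` and likewise with
`(b-t)^k` in place of `(t-a)^k`. -/
theorem integral_pow_mul_ge
    (a b : ℝ) (hab : a < b) (K : ℝ → ℝ) (hK : Measurable K)
    (hK01 : ∀ t ∈ Set.Ioo a b, K t ∈ Set.Icc (0 : ℝ) 1) (k : ℕ) :
    (1 / (k + 1) : ℝ) * (∫ t in a..b, K t) ^ (k + 1) ≤ ∫ t in a..b, (t - a) ^ k * K t ∧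
    (1 / (k + 1) : ℝ) * (∫ t in a..b, K t) ^ (k + 1) ≤ ∫ t in a..b, (b - t) ^ k * K t := by
  constructor
  · exact aux_integral_pow_mul_ge a b hab K hK hK01 k
  · have hK'01 : ∀ t ∈ Set.Ioo a b, K (a + b - t) ∈ Set.Icc (0:ℝ) 1 := by
      intro t ht
      exact hK01 _ ⟨by simp only [Set.mem_Ioo] at ht ⊢; linarith [ht.2],
        by simp only [Set.mem_Ioo] at ht ⊢; linarith [ht.1]⟩
    have key := aux_integral_pow_mul_ge a b hab (fun t => K (a + b - t))
      (hK.comp (measurable_const.sub measurable_id)) hK'01 k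
    have h1 : (∫ t in a..b, K (a + b - t)) = ∫ t in a..b, K t := by
      have h := intervalIntegral.integral_comp_sub_left (a := a) (b := b) K (a + b)
      simp only [show a + b - b = a from by ring, show a + b - a = b from by ring] at h
      exact h
    have h2 : (∫ t in a..b, (t - a) ^ k * K (a + b - t)) = ∫ t in a..b, (b - t) ^ k * K t := by
      have h := intervalIntegral.integral_comp_sub_left (a := a) (b := b)
        (fun x => (b - x) ^ k * K x) (a + b)
      simp only [show a + b - b = a from by ring, show a + b - a = b from by ring,
        show ∀ t : ℝ, b - (a + b - t) = t - a from fun t => by ring] at h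
      exact h
    rw [h1, h2] at key
    exact key
end
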